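/- arXiv:2107.01157 — 12 statements merged into one kernel-verified Lean document; each statement's English description precedes it below -/
import Mathlib

section
/- If G is a finite group of odd order, then the matching number of the power graph of G equals (|G| - 1)/2. -/
open SimpleGraph

def powerGraph (G : Type*) [Group G] : SimpleGraph G where
  Adj x y := x ≠ y ∧ ((∃ n : ℕ, y ^ n = x) ∨ (∃ n : ℕ, x ^ n = y))
  symm := ⟨fun x y ⟨h, hp⟩ => ⟨h.symm, hp.symm⟩⟩
  loopless := ⟨fun x ⟨h, _⟩ => h rfl⟩

noncomputable def matchingNumber {V : Type*} (Γ : SimpleGraph V) : ℕ :=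
  sSup {n | ∃ M : Γ.Subgraph, M.IsMatching ∧ M.edgeSet.ncard = n}

def hasPerfectMatching {V : Type*} (Γ : SimpleGraph V) : Prop :=
  ∃ M : Γ.Subgraph, M.IsPerfectMatching

/-- In any matching, twice the number of edges is at most the number of vertices. -/
lemma aux_two_mul_le {V : Type*} [Fintype V] (Γ : SimpleGraph V) (M : Γ.Subgraph)
    (hM : M.IsMatching) : 2 * M.edgeSet.ncard ≤ Fintype.card V := by
  classical
  have hfinE : M.edgeSet.Finite := Set.toFinite _
  have hfinV : M.verts.Finite := Set.toFinite _
  set t := hfinE.toFinset with ht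
  set s := hfinV.toFinset with hs
  set f : V → Sym2 V := fun v => if h : v ∈ M.verts then (hM.toEdge ⟨v, h⟩ : Sym2 V)
    else s(v, v) with hf
  have hmap : ∀ v ∈ s, f v ∈ t := by
    intro v hv
    have hv' : v ∈ M.verts := hfinV.mem_toFinset.mp hv
    simp only [hf, dif_pos hv']
    exact hfinE.mem_toFinset.mpr (hM.toEdge ⟨v, hv'⟩).property
  have hsum := Finset.card_eq_sum_card_fiberwise hmap
  have h2 : ∀ e ∈ t, 2 ≤ (s.filter (fun v => f v = e)).card := by
    have key : ∀ e, e ∈ M.edgeSet → 2 ≤ (s.filter (fun v => f v = e)).card := by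
      intro e
      induction e using Sym2.ind with
      | _ a b =>
        intro heE
        rw [SimpleGraph.Subgraph.mem_edgeSet] at heE
        have hab : a ≠ b := (M.adj_sub heE).ne
        have ha : a ∈ M.verts := M.edge_vert heE
        have hb : b ∈ M.verts := M.edge_vert heE.symm
        have fa : f a = s(a, b) := by
          simp only [hf, dif_pos ha]
          rw [hM.toEdge_eq_of_adj heE]
        have fb : f b = s(a, b) := by
          simp only [hf, dif_pos hb]
          rw [hM.toEdge_eq_of_adj heE.symm]
          exact Sym2.eq_swap
        have hsub : ({a, b} : Finset V) ⊆ s.filter (fun v => f v = s(a, b)) := by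
          intro x hx
          rcases Finset.mem_insert.mp hx with rfl | hx
          · exact Finset.mem_filter.mpr ⟨hfinV.mem_toFinset.mpr ha, fa⟩
          · rcases Finset.mem_singleton.mp hx with rfl
            exact Finset.mem_filter.mpr ⟨hfinV.mem_toFinset.mpr hb, fb⟩
        calc 2 = ({a, b} : Finset V).card := (Finset.card_pair hab).symm
          _ ≤ _ := Finset.card_le_card hsub
    intro e he
    exact key e (hfinE.mem_toFinset.mp he)
  have hcard : 2 * t.card ≤ s.card := by
    rw [hsum]
    calc 2 * t.card = ∑ _e ∈ t, 2 := by rw [Finset.sum_const, smul_eq_mul, mul_comm]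
      _ ≤ ∑ e ∈ t, (s.filter (fun v => f v = e)).card := Finset.sum_le_sum h2
  have hE : M.edgeSet.ncard = t.card := by
    rw [ht, ← Set.ncard_coe_finset, hfinE.coe_toFinset]
  rw [hE]
  exact le_trans hcard (le_trans (Finset.card_le_univ s) (le_of_eq (Finset.card_univ)))

section Construction

variable {G : Type*} [Group G] [Fintype G]

lemma aux_inv_ne (h : Odd (Fintype.card G)) {x : G} (hx : x ≠ 1) : x ≠ x⁻¹ := by
  intro heq
  have h2 : x ^ 2 = 1 := by
    rw [pow_two]
    nth_rewrite 2 [heq]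
    exact mul_inv_cancel x
  have hd : orderOf x ∣ 2 := orderOf_dvd_of_pow_eq_one h2
  have hdc : orderOf x ∣ Fintype.card G := orderOf_dvd_card
  rcases (Nat.dvd_prime Nat.prime_two).mp hd with ho | ho
  · exact hx (orderOf_eq_one_iff.mp ho)
  · rw [ho] at hdc
    exact (Nat.not_even_iff_odd.mpr h) (even_iff_two_dvd.mpr hdc)

lemma aux_pow_inv (x : G) : x ^ (Fintype.card G - 1) = x⁻¹ := by
  have h1 : x ^ Fintype.card G = 1 := pow_card_eq_one
  have hc : Fintype.card G - 1 + 1 = Fintype.card G :=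
    Nat.succ_pred_eq_of_pos Fintype.card_pos
  apply eq_inv_of_mul_eq_one_left
  rw [← pow_succ, hc, h1]

/-- The matching pairing each nonidentity element with its inverse. -/
def invMatching (h : Odd (Fintype.card G)) : (powerGraph G).Subgraph where
  verts := {x | x ≠ 1}
  Adj x y := x ≠ 1 ∧ y = x⁻¹
  adj_sub := by
    rintro x y ⟨hx, rfl⟩
    exact (⟨aux_inv_ne h hx, Or.inr ⟨Fintype.card G - 1, aux_pow_inv x⟩⟩ :
      x ≠ x⁻¹ ∧ ((∃ n : ℕ, x⁻¹ ^ n = x) ∨ (∃ n : ℕ, x ^ n = x⁻¹)))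
  edge_vert := fun hxy => hxy.1
  symm := by
    constructor
    rintro x y ⟨hx, rfl⟩
    exact ⟨inv_ne_one.mpr hx, (inv_inv x).symm⟩

lemma invMatching_isMatching (h : Odd (Fintype.card G)) : (invMatching h).IsMatching := by
  intro v hv
  exact ⟨v⁻¹, ⟨hv, rfl⟩, fun w hw => hw.2⟩

lemma invMatching_ncard (h : Odd (Fintype.card G)) :
    (invMatching h).edgeSet.ncard = (Fintype.card G - 1) / 2 := by
  classical
  set T : Finset (Sym2 G) := (Finset.univ.erase (1 : G)).image (fun x => s(x, x⁻¹)) with hT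
  have hedge : (invMatching h).edgeSet = ↑T := by
    ext e
    induction e using Sym2.ind with
    | _ a b =>
      rw [SimpleGraph.Subgraph.mem_edgeSet]
      constructor
      · rintro ⟨ha, rfl⟩
        exact Finset.mem_coe.mpr (Finset.mem_image.mpr
          ⟨a, Finset.mem_erase.mpr ⟨ha, Finset.mem_univ a⟩, rfl⟩)
      · intro hmem
        obtain ⟨x, hx, hxe⟩ := Finset.mem_image.mp (Finset.mem_coe.mp hmem)
        have hx1 : x ≠ 1 := (Finset.mem_erase.mp hx).1
        rcases Sym2.eq_iff.mp hxe with ⟨rfl, rfl⟩ | ⟨h1, h2⟩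
        · exact ⟨hx1, rfl⟩
        · subst h1; subst h2
          exact ⟨inv_ne_one.mpr hx1, (inv_inv x).symm⟩
  have hfib : ∀ e ∈ T, ((Finset.univ.erase (1 : G)).filter
      (fun y => s(y, y⁻¹) = e)).card = 2 := by
    intro e he
    obtain ⟨x, hx, rfl⟩ := Finset.mem_image.mp he
    have hx1 : x ≠ 1 := (Finset.mem_erase.mp hx).1
    have hfil : (Finset.univ.erase (1 : G)).filter (fun y => s(y, y⁻¹) = s(x, x⁻¹))
        = {x, x⁻¹} := by
      ext y
      simp only [Finset.mem_filter, Finset.mem_erase, Finset.mem_univ, true_and, and_true,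
        Finset.mem_insert, Finset.mem_singleton]
      constructor
      · rintro ⟨hy1, hy⟩
        rcases Sym2.eq_iff.mp hy with ⟨rfl, _⟩ | ⟨rfl, _⟩
        · exact Or.inl rfl
        · exact Or.inr rfl
      · rintro (rfl | rfl)
        · exact ⟨hx1, rfl⟩
        · exact ⟨inv_ne_one.mpr hx1, Sym2.eq_iff.mpr (Or.inr ⟨rfl, inv_inv x⟩)⟩
    rw [hfil]
    exact Finset.card_pair (aux_inv_ne h hx1)
  have hmap : ∀ y ∈ Finset.univ.erase (1 : G), s(y, y⁻¹) ∈ T := by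
    intro y hy
    exact Finset.mem_image.mpr ⟨y, hy, rfl⟩
  have hsum := Finset.card_eq_sum_card_fiberwise hmap
  have hcount : Fintype.card G - 1 = 2 * T.card := by
    have h1 : (Finset.univ.erase (1 : G)).card = Fintype.card G - 1 := by
      rw [Finset.card_erase_of_mem (Finset.mem_univ _), Finset.card_univ]
    rw [← h1, hsum, Finset.sum_congr rfl hfib, Finset.sum_const, smul_eq_mul, mul_comm]
  rw [hedge, Set.ncard_coe_finset]
  omega

end Construction

theorem stmt0 (G : Type*) [Group G] [Fintype G] (h : Odd (Fintype.card G)) :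
    matchingNumber (powerGraph G) = (Fintype.card G - 1) / 2 := by
  classical
  have hub : ∀ n ∈ {n | ∃ M : (powerGraph G).Subgraph, M.IsMatching ∧ M.edgeSet.ncard = n},
      n ≤ (Fintype.card G - 1) / 2 := by
    rintro n ⟨M, hM, rfl⟩
    have h2 := aux_two_mul_le (powerGraph G) M hM
    obtain ⟨k, hk⟩ := h
    omega
  have hmem : (Fintype.card G - 1) / 2 ∈
      {n | ∃ M : (powerGraph G).Subgraph, M.IsMatching ∧ M.edgeSet.ncard = n} :=
    ⟨invMatching h, invMatching_isMatching h, invMatching_ncard h⟩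
  unfold matchingNumber
  exact le_antisymm (csSup_le ⟨_, hmem⟩ hub) (le_csSup ⟨_, hub⟩ hmem)
end

section
/- Let G be a finite group of even order and T = {g ∈ G : g² = 1}. Then the power graph of G has a maximum matching whose set of unmatched vertices is contained in T. -/
open SimpleGraph

section Aux

variable {G : Type*} [Group G] [Fintype G]

lemma inv_eq_pow_card_sub_one (x : G) : x⁻¹ = x ^ (Fintype.card G - 1) := by
  have h1 : x * x ^ (Fintype.card G - 1) = 1 := by
    rw [← pow_succ']
    have : Fintype.card G - 1 + 1 = Fintype.card G :=
      Nat.succ_pred_eq_of_pos Fintype.card_pos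
    rw [this, pow_card_eq_one]
  exact inv_eq_of_mul_eq_one_right h1

lemma ne_inv_of_sq_ne_one {x : G} (hx : x ^ 2 ≠ 1) : x ≠ x⁻¹ := by
  intro h
  apply hx
  rw [pow_two]
  nth_rewrite 2 [h]
  exact mul_inv_cancel x

lemma pg_adj_inv {x : G} (hx : x ^ 2 ≠ 1) : (powerGraph G).Adj x x⁻¹ := by
  refine ⟨ne_inv_of_sq_ne_one hx, Or.inr ⟨Fintype.card G - 1, ?_⟩⟩
  exact (inv_eq_pow_card_sub_one x).symm

lemma pg_adj_of_inv {x y : G} (hxy : x ≠ y) (h : (powerGraph G).Adj x⁻¹ y) :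
    (powerGraph G).Adj x y := by
  refine ⟨hxy, ?_⟩
  rcases h.2 with ⟨n, hn⟩ | ⟨n, hn⟩
  · -- y ^ n = x⁻¹
    left
    refine ⟨n * (Fintype.card G - 1), ?_⟩
    rw [pow_mul, ← inv_eq_pow_card_sub_one, hn, inv_inv]
  · -- (x⁻¹) ^ n = y
    right
    refine ⟨(Fintype.card G - 1) * n, ?_⟩
    rw [pow_mul, ← inv_eq_pow_card_sub_one, hn]

/-- Key lemma: if `u` is unmatched by `M` and `u^2 ≠ 1`, then either there is a strictly
larger matching, or there is an equal-size matching whose unmatched set replaces `u`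
by some `w` with `w^2 = 1`. -/
lemma key_lemma :
    ∀ (n : ℕ) (M : (powerGraph G).Subgraph), M.IsMatching →
    ∀ (u : G), u ∉ M.verts → u ^ 2 ≠ 1 →
    ({x ∈ M.verts | ¬ M.Adj x x⁻¹}).ncard ≤ n →
    (∃ M' : (powerGraph G).Subgraph, M'.IsMatching ∧
        M'.edgeSet.ncard = M.edgeSet.ncard + 1) ∨
    (∃ (M' : (powerGraph G).Subgraph) (w : G), M'.IsMatching ∧
        M'.edgeSet.ncard = M.edgeSet.ncard ∧
        M'.verts = insert u (M.verts \ {w}) ∧ w ^ 2 = 1 ∧ w ∈ M.verts) := by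
  intro n
  induction n with
  | zero =>
    intro M hM u hu hu2 hmeas
    by_cases hvin : u⁻¹ ∈ M.verts
    · -- then u⁻¹ is in the "bad" set, contradicting measure 0
      exfalso
      have hbad : u⁻¹ ∈ {x ∈ M.verts | ¬ M.Adj x x⁻¹} := by
        refine ⟨hvin, ?_⟩
        rw [inv_inv]
        intro hc
        exact hu (M.edge_vert hc.symm)
      have : 0 < ({x ∈ M.verts | ¬ M.Adj x x⁻¹}).ncard :=
        (Set.ncard_pos (Set.toFinite _)).mpr ⟨u⁻¹, hbad⟩
      omega
    · -- add the edge {u, u⁻¹}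
      left
      have hne : u ≠ u⁻¹ := ne_inv_of_sq_ne_one hu2
      have hadj : (powerGraph G).Adj u u⁻¹ := pg_adj_inv hu2
      refine ⟨M ⊔ (powerGraph G).subgraphOfAdj hadj, ?_, ?_⟩
      · apply hM.sup (SimpleGraph.Subgraph.IsMatching.subgraphOfAdj hadj)
        rw [hM.support_eq_verts,
          (SimpleGraph.Subgraph.IsMatching.subgraphOfAdj hadj).support_eq_verts]
        rw [Set.disjoint_left]
        intro a haM hain
        simp only [subgraphOfAdj_verts, Set.mem_insert_iff, Set.mem_singleton_iff] at hain
        rcases hain with rfl | rfl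
        · exact hu haM
        · exact hvin haM
      · rw [SimpleGraph.Subgraph.edgeSet_sup]
        have he : ((powerGraph G).subgraphOfAdj hadj).edgeSet = {s(u, u⁻¹)} := by
          simp
        rw [he]
        have hnm : s(u, u⁻¹) ∉ M.edgeSet := by
          intro hc
          exact hu (M.edge_vert (SimpleGraph.Subgraph.mem_edgeSet.mp hc))
        rw [Set.union_singleton, Set.ncard_insert_of_notMem hnm (Set.toFinite _)]
  | succ n ih =>
    intro M hM u hu hu2 hmeas
    by_cases hvin : u⁻¹ ∈ M.verts
    swap
    · -- same as base case: add the edge {u, u⁻¹}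
      left
      have hne : u ≠ u⁻¹ := ne_inv_of_sq_ne_one hu2
      have hadj : (powerGraph G).Adj u u⁻¹ := pg_adj_inv hu2
      refine ⟨M ⊔ (powerGraph G).subgraphOfAdj hadj, ?_, ?_⟩
      · apply hM.sup (SimpleGraph.Subgraph.IsMatching.subgraphOfAdj hadj)
        rw [hM.support_eq_verts,
          (SimpleGraph.Subgraph.IsMatching.subgraphOfAdj hadj).support_eq_verts]
        rw [Set.disjoint_left]
        intro a haM hain
        simp only [subgraphOfAdj_verts, Set.mem_insert_iff, Set.mem_singleton_iff] at hain
        rcases hain with rfl | rfl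
        · exact hu haM
        · exact hvin haM
      · rw [SimpleGraph.Subgraph.edgeSet_sup]
        have he : ((powerGraph G).subgraphOfAdj hadj).edgeSet = {s(u, u⁻¹)} := by
          simp
        rw [he]
        have hnm : s(u, u⁻¹) ∉ M.edgeSet := by
          intro hc
          exact hu (M.edge_vert (SimpleGraph.Subgraph.mem_edgeSet.mp hc))
        rw [Set.union_singleton, Set.ncard_insert_of_notMem hnm (Set.toFinite _)]
    · -- u⁻¹ is matched, say to y; swap to match u with u⁻¹, unmatching y
      obtain ⟨y, hy, hyu⟩ := hM hvin
      have hneu : u ≠ u⁻¹ := ne_inv_of_sq_ne_one hu2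
      have hyverts : y ∈ M.verts := M.edge_vert hy.symm
      have hyne : y ≠ u := fun h => hu (h ▸ hyverts)
      have hynei : y ≠ u⁻¹ := fun h => (M.adj_sub hy).ne (h ▸ rfl)
      -- any neighbor of y is u⁻¹
      have haux : ∀ z, M.Adj y z → z = u⁻¹ := by
        intro z hz
        obtain ⟨q, hq, hqu⟩ := hM hyverts
        rw [hqu z hz, hqu u⁻¹ hy.symm]
      have hadj : (powerGraph G).Adj u u⁻¹ := pg_adj_inv hu2
      -- the swapped subgraph
      set M₁ : (powerGraph G).Subgraph :=
        { verts := insert u (M.verts \ {y})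
          Adj := fun a b =>
            (M.Adj a b ∧ a ≠ y ∧ b ≠ y) ∨ (a = u ∧ b = u⁻¹) ∨ (a = u⁻¹ ∧ b = u)
          adj_sub := by
            rintro a b (⟨h, -, -⟩ | ⟨rfl, rfl⟩ | ⟨rfl, rfl⟩)
            · exact M.adj_sub h
            · exact hadj
            · exact hadj.symm
          edge_vert := by
            rintro a b (⟨h, ha, -⟩ | ⟨rfl, rfl⟩ | ⟨rfl, rfl⟩)
            · exact Set.mem_insert_of_mem _ ⟨M.edge_vert h, ha⟩
            · exact Set.mem_insert _ _
            · exact Set.mem_insert_of_mem _ ⟨hvin, fun h => hynei h.symm⟩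
          symm := by
            constructor
            rintro a b (⟨h, ha, hb⟩ | ⟨rfl, rfl⟩ | ⟨rfl, rfl⟩)
            · exact Or.inl ⟨h.symm, hb, ha⟩
            · exact Or.inr (Or.inr ⟨rfl, rfl⟩)
            · exact Or.inr (Or.inl ⟨rfl, rfl⟩) } with hM₁def
      have hM₁verts : M₁.verts = insert u (M.verts \ {y}) := rfl
      have hM₁ : M₁.IsMatching := by
        intro v hv
        rcases hv with hva | ⟨hvM, hvy⟩
        · -- v = u, partner u⁻¹
          rw [hva]
          refine ⟨u⁻¹, Or.inr (Or.inl ⟨rfl, rfl⟩), ?_⟩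
          rintro w (⟨h, -, -⟩ | ⟨-, rfl⟩ | ⟨h, -⟩)
          · exact absurd (M.edge_vert h) hu
          · rfl
          · exact absurd h hneu
        · by_cases hvu : v = u⁻¹
          · subst hvu
            refine ⟨u, Or.inr (Or.inr ⟨rfl, rfl⟩), ?_⟩
            rintro w (⟨h, -, hw⟩ | ⟨h, -⟩ | ⟨-, rfl⟩)
            · exact absurd (hyu w h) hw
            · exact absurd h.symm hneu
            · rfl
          · -- v has its old partner
            obtain ⟨p, hp, hpu⟩ := hM hvM
            have hpy : p ≠ y := by
              intro h
              exact hvu (haux v (h ▸ hp).symm)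
            refine ⟨p, Or.inl ⟨hp, hvy, hpy⟩, ?_⟩
            rintro w (⟨h, -, -⟩ | ⟨h, -⟩ | ⟨h, -⟩)
            · exact hpu w h
            · exact absurd (M.edge_vert (h ▸ hp)) hu
            · exact absurd h hvu
      have hM₁edges : M₁.edgeSet = insert s(u, u⁻¹) (M.edgeSet \ {s(u⁻¹, y)}) := by
        ext e
        induction e with
        | _ a b =>
          simp only [SimpleGraph.Subgraph.mem_edgeSet, Set.mem_insert_iff,
            Set.mem_diff, Set.mem_singleton_iff, Sym2.eq_iff]
          constructor
          · rintro (⟨h, ha, hb⟩ | ⟨rfl, rfl⟩ | ⟨rfl, rfl⟩)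
            · refine Or.inr ⟨h, ?_⟩
              rintro (⟨rfl, rfl⟩ | ⟨rfl, rfl⟩)
              · exact hb rfl
              · exact ha rfl
            · exact Or.inl (Or.inl ⟨rfl, rfl⟩)
            · exact Or.inl (Or.inr ⟨rfl, rfl⟩)
          · rintro ((⟨rfl, rfl⟩ | ⟨rfl, rfl⟩) | ⟨h, hne⟩)
            · exact Or.inr (Or.inl ⟨rfl, rfl⟩)
            · exact Or.inr (Or.inr ⟨rfl, rfl⟩)
            · refine Or.inl ⟨h, ?_, ?_⟩
              · intro hay
                subst hay
                exact hne (Or.inr ⟨rfl, haux b h⟩)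
              · intro hby
                subst hby
                exact hne (Or.inl ⟨haux a h.symm, rfl⟩)
      have he_mem : s(u⁻¹, y) ∈ M.edgeSet := SimpleGraph.Subgraph.mem_edgeSet.mpr hy
      have he_not : s(u, u⁻¹) ∉ M.edgeSet := by
        intro hc
        exact hu (M.edge_vert (SimpleGraph.Subgraph.mem_edgeSet.mp hc))
      have hM₁card : M₁.edgeSet.ncard = M.edgeSet.ncard := by
        rw [hM₁edges]
        exact Set.ncard_exchange he_not he_mem
      -- measure decreases
      have hmeas₁ : ({x ∈ M₁.verts | ¬ M₁.Adj x x⁻¹}).ncard ≤ n := by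
        have hsub : {x ∈ M₁.verts | ¬ M₁.Adj x x⁻¹} ⊆
            {x ∈ M.verts | ¬ M.Adj x x⁻¹} \ {u⁻¹} := by
          rintro x ⟨hxv, hxa⟩
          have hxu : x ≠ u := by
            rintro rfl
            exact hxa (Or.inr (Or.inl ⟨rfl, rfl⟩))
          have hxui : x ≠ u⁻¹ := by
            rintro rfl
            exact hxa (Or.inr (Or.inr ⟨rfl, inv_inv u⟩))
          rcases hxv with rfl | ⟨hxM, hxy⟩
          · exact absurd rfl hxu
          refine ⟨⟨hxM, ?_⟩, hxui⟩
          intro hc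
          apply hxa
          refine Or.inl ⟨hc, hxy, ?_⟩
          intro hxiy
          exact hxui (haux x (hxiy ▸ hc).symm)
        have hmem : u⁻¹ ∈ {x ∈ M.verts | ¬ M.Adj x x⁻¹} := by
          refine ⟨hvin, ?_⟩
          rw [inv_inv]
          intro hc
          exact hu (M.edge_vert hc.symm)
        calc ({x ∈ M₁.verts | ¬ M₁.Adj x x⁻¹}).ncard
            ≤ ({x ∈ M.verts | ¬ M.Adj x x⁻¹} \ {u⁻¹}).ncard :=
              Set.ncard_le_ncard hsub (Set.toFinite _)
          _ = ({x ∈ M.verts | ¬ M.Adj x x⁻¹}).ncard - 1 :=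
              Set.ncard_diff_singleton_of_mem hmem
          _ ≤ n := by omega
      by_cases hy2 : y ^ 2 = 1
      · -- done: y is the new unmatched vertex
        right
        exact ⟨M₁, y, hM₁, hM₁card, hM₁verts, hy2, hyverts⟩
      · -- recurse on y
        have hynotin : y ∉ M₁.verts := by
          rw [hM₁verts]
          rintro (rfl | ⟨-, hyy⟩)
          · exact hyne rfl
          · exact hyy rfl
        rcases ih M₁ hM₁ y hynotin hy2 hmeas₁ with ⟨M₂, hm₂, hc₂⟩ | ⟨M₂, w, hm₂, hc₂, hv₂, hw2, hwin⟩
        · left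
          exact ⟨M₂, hm₂, by rw [hc₂, hM₁card]⟩
        · right
          have hwy : w ≠ y := fun h => hy2 (h ▸ hw2)
          have hwu : w ≠ u := by
            rintro rfl
            exact hu2 hw2
          have hwinM : w ∈ M.verts := by
            rw [hM₁verts] at hwin
            rcases hwin with rfl | ⟨h, -⟩
            · exact absurd rfl hwu
            · exact h
          refine ⟨M₂, w, hm₂, by rw [hc₂, hM₁card], ?_, hw2, hwinM⟩
          rw [hv₂, hM₁verts]
          ext x
          simp only [Set.mem_insert_iff, Set.mem_diff, Set.mem_singleton_iff]
          constructor
          · rintro (rfl | ⟨(rfl | ⟨hxM, hxy⟩), hxw⟩)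
            · exact Or.inr ⟨hyverts, (fun hh => hwy hh.symm)⟩
            · exact Or.inl rfl
            · exact Or.inr ⟨hxM, hxw⟩
          · rintro (rfl | ⟨hxM, hxw⟩)
            · exact Or.inr ⟨Or.inl rfl, (fun hh => hwu hh.symm)⟩
            · by_cases hxy : x = y
              · exact Or.inl hxy
              · exact Or.inr ⟨Or.inr ⟨hxM, hxy⟩, hxw⟩

end Aux

theorem stmt1 (G : Type*) [Group G] [Fintype G] (h : Even (Fintype.card G)) :
    ∃ M : (powerGraph G).Subgraph, M.IsMatching ∧
      M.edgeSet.ncard = matchingNumber (powerGraph G) ∧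
      M.vertsᶜ ⊆ {g : G | g ^ 2 = 1} := by
  classical
  set Γ := powerGraph G with hΓ
  set S : Set ℕ := {n | ∃ M : Γ.Subgraph, M.IsMatching ∧ M.edgeSet.ncard = n} with hS
  have hne : (0 : ℕ) ∈ S := by
    refine ⟨⊥, ?_, ?_⟩
    · intro v hv
      simp only [SimpleGraph.Subgraph.verts_bot, Set.mem_empty_iff_false] at hv
    · rw [SimpleGraph.Subgraph.edgeSet_bot, Set.ncard_empty]
  have hbdd : BddAbove S := by
    refine ⟨Nat.card (Sym2 G), ?_⟩
    rintro n ⟨M, -, rfl⟩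
    calc M.edgeSet.ncard ≤ (Set.univ : Set (Sym2 G)).ncard :=
          Set.ncard_le_ncard (Set.subset_univ _) (Set.toFinite _)
      _ = Nat.card (Sym2 G) := Set.ncard_univ _
  have hmem : matchingNumber Γ ∈ S := Nat.sSup_mem ⟨0, hne⟩ hbdd
  obtain ⟨M₀, hM₀, hc₀⟩ := hmem
  -- outer induction on the number of unmatched vertices with square ≠ 1
  suffices H : ∀ (k : ℕ) (M : Γ.Subgraph), M.IsMatching →
      M.edgeSet.ncard = matchingNumber Γ →
      ({x : G | x ∉ M.verts ∧ x ^ 2 ≠ 1}).ncard ≤ k →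
      ∃ M' : Γ.Subgraph, M'.IsMatching ∧
        M'.edgeSet.ncard = matchingNumber Γ ∧
        M'.vertsᶜ ⊆ {g : G | g ^ 2 = 1} by
    exact H _ M₀ hM₀ hc₀ le_rfl
  intro k
  induction k with
  | zero =>
    intro M hM hc hmeas
    refine ⟨M, hM, hc, ?_⟩
    intro g hg
    by_contra h2
    have : g ∈ {x : G | x ∉ M.verts ∧ x ^ 2 ≠ 1} := ⟨hg, h2⟩
    have hpos : 0 < ({x : G | x ∉ M.verts ∧ x ^ 2 ≠ 1}).ncard :=
      (Set.ncard_pos (Set.toFinite _)).mpr ⟨g, this⟩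
    omega
  | succ k ih =>
    intro M hM hc hmeas
    by_cases hb : {x : G | x ∉ M.verts ∧ x ^ 2 ≠ 1} = ∅
    · refine ⟨M, hM, hc, ?_⟩
      intro g hg
      by_contra h2
      have : g ∈ {x : G | x ∉ M.verts ∧ x ^ 2 ≠ 1} := ⟨hg, h2⟩
      rw [hb] at this
      exact this
    · obtain ⟨u, huM, hu2⟩ := Set.nonempty_iff_ne_empty.mpr hb
      rcases key_lemma ({x ∈ M.verts | ¬ M.Adj x x⁻¹}).ncard M hM u huM hu2 le_rfl with
        ⟨M', hm', hc'⟩ | ⟨M', w, hm', hc', hv', hw2, hwin⟩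
      · -- contradiction with maximality
        exfalso
        have hmem' : M'.edgeSet.ncard ∈ S := ⟨M', hm', rfl⟩
        have hle : M'.edgeSet.ncard ≤ matchingNumber Γ := le_csSup hbdd hmem'
        rw [hc', hc] at hle
        omega
      · -- recurse
        apply ih M' hm' (by rw [hc', hc])
        have hsub : {x : G | x ∉ M'.verts ∧ x ^ 2 ≠ 1} ⊆
            {x : G | x ∉ M.verts ∧ x ^ 2 ≠ 1} \ {u} := by
          rintro x ⟨hxv, hx2⟩
          rw [hv'] at hxv
          simp only [Set.mem_insert_iff, Set.mem_diff, Set.mem_singleton_iff, not_or,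
            not_and, not_not] at hxv
          obtain ⟨hxu, hxor⟩ := hxv
          have hxw : x ≠ w := fun h => hx2 (h ▸ hw2)
          refine ⟨⟨?_, hx2⟩, hxu⟩
          intro hxM
          exact hxw (hxor hxM)
        have hmemu : u ∈ {x : G | x ∉ M.verts ∧ x ^ 2 ≠ 1} := ⟨huM, hu2⟩
        calc ({x : G | x ∉ M'.verts ∧ x ^ 2 ≠ 1}).ncard
            ≤ ({x : G | x ∉ M.verts ∧ x ^ 2 ≠ 1} \ {u}).ncard :=
              Set.ncard_le_ncard hsub (Set.toFinite _)
          _ = ({x : G | x ∉ M.verts ∧ x ^ 2 ≠ 1}).ncard - 1 :=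
              Set.ncard_diff_singleton_of_mem hmemu
          _ ≤ k := by omega
end

section
/- Let G be a finite group of even order, T the set consisting of the identity and the involutions of G. Then the matching number of the power graph of G is at least 1 + (|G| - |T|)/2. -/
open SimpleGraph

lemma verts_le_two_mul_edges {V : Type*} [Fintype V] {Γ : SimpleGraph V}
    (M : Γ.Subgraph) (h : M.IsMatching) : M.verts.ncard ≤ 2 * M.edgeSet.ncard := by
  classical
  set f : V → Sym2 V := fun v => if hv : v ∈ M.verts then (h.toEdge ⟨v, hv⟩ : Sym2 V) else s(v, v)
  have hmem : ∀ v (hv : v ∈ M.verts), v ∈ f v := by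
    intro v hv
    simp only [f, dif_pos hv, SimpleGraph.Subgraph.IsMatching.toEdge]
    exact Sym2.mem_mk_left _ _
  have hedge : ∀ v (hv : v ∈ M.verts), f v ∈ M.edgeSet := by
    intro v hv
    simp only [f, dif_pos hv]
    exact (h.toEdge ⟨v, hv⟩).2
  have key : M.verts.toFinset.card ≤ 2 * (M.verts.toFinset.image f).card := by
    apply Finset.card_le_mul_card_image
    intro e he
    obtain ⟨a, b⟩ := e
    have : (M.verts.toFinset.filter fun x => f x = s(a, b)) ⊆ {a, b} := by
      intro x hx
      simp only [Finset.mem_filter, Set.mem_toFinset] at hx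
      have := hmem x hx.1
      rw [hx.2] at this
      simpa [Finset.mem_insert] using this
    calc (M.verts.toFinset.filter fun x => f x = s(a, b)).card
        ≤ ({a, b} : Finset V).card := Finset.card_le_card this
      _ ≤ 2 := Finset.card_insert_le _ _ |>.trans (by simp)
  have himg : (M.verts.toFinset.image f : Set (Sym2 V)) ⊆ M.edgeSet := by
    intro e he
    simp only [Finset.coe_image, Set.mem_image, Finset.mem_coe, Set.mem_toFinset] at he
    obtain ⟨v, hv, rfl⟩ := he
    exact hedge v hv
  have h2 : (M.verts.toFinset.image f).card ≤ M.edgeSet.ncard := by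
    rw [← Set.ncard_coe_finset]
    exact Set.ncard_le_ncard himg (Set.toFinite _)
  calc M.verts.ncard = M.verts.toFinset.card := Set.ncard_eq_toFinset_card' _
    _ ≤ 2 * (M.verts.toFinset.image f).card := key
    _ ≤ 2 * M.edgeSet.ncard := by omega

theorem stmt2 (G : Type*) [Group G] [Fintype G] (h : Even (Fintype.card G)) :
    1 + (Fintype.card G - {g : G | g ^ 2 = 1}.ncard) / 2 ≤ matchingNumber (powerGraph G) := by
  classical
  obtain ⟨t, ht⟩ := exists_prime_orderOf_dvd_card (G := G) 2
    (h.two_dvd)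
  have ht2 : t ^ 2 = 1 := by rw [← ht]; exact pow_orderOf_eq_one t
  have ht1 : t ≠ 1 := by
    intro hh; rw [hh, orderOf_one] at ht; norm_num at ht
  set S : Set G := {g : G | g ^ 2 ≠ 1} with hS
  -- adjacency facts
  have adj_inv : ∀ x : G, x ^ 2 ≠ 1 → (powerGraph G).Adj x x⁻¹ := by
    intro x hx
    show x ≠ x⁻¹ ∧ ((∃ n : ℕ, x⁻¹ ^ n = x) ∨ (∃ n : ℕ, x ^ n = x⁻¹))
    constructor
    · intro hh
      apply hx
      rw [pow_two]
      nth_rewrite 2 [hh]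
      exact mul_inv_cancel x
    · left
      refine ⟨orderOf x - 1, ?_⟩
      have hpos : 0 < orderOf x := orderOf_pos x
      have : x⁻¹ ^ (orderOf x - 1) * x⁻¹ ^ 1 = 1 := by
        rw [← pow_add]
        have : orderOf x - 1 + 1 = orderOf x := by omega
        rw [this, inv_pow, pow_orderOf_eq_one, inv_one]
      rw [pow_one] at this
      calc x⁻¹ ^ (orderOf x - 1) = x⁻¹ ^ (orderOf x - 1) * x⁻¹ * x := by group
        _ = x := by rw [this, one_mul]
  have adj_1t : (powerGraph G).Adj 1 t := by
    show (1 : G) ≠ t ∧ _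
    exact ⟨fun hh => ht1 hh.symm, Or.inl ⟨2, ht2⟩⟩
  -- the subgraph
  set M : (powerGraph G).Subgraph :=
    { verts := {1, t} ∪ S
      Adj := fun x y => (x = 1 ∧ y = t) ∨ (x = t ∧ y = 1) ∨ (x ^ 2 ≠ 1 ∧ y = x⁻¹)
      adj_sub := by
        rintro x y (⟨rfl, rfl⟩ | ⟨rfl, rfl⟩ | ⟨hx, rfl⟩)
        · exact adj_1t
        · exact adj_1t.symm
        · exact adj_inv x hx
      edge_vert := by
        rintro x y (⟨rfl, _⟩ | ⟨rfl, _⟩ | ⟨hx, _⟩)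
        · left; left; rfl
        · left; right; rfl
        · right; exact hx
      symm := ⟨by
        rintro x y (⟨rfl, rfl⟩ | ⟨rfl, rfl⟩ | ⟨hx, rfl⟩)
        · right; left; exact ⟨rfl, rfl⟩
        · left; exact ⟨rfl, rfl⟩
        · right; right
          constructor
          · intro hh
            exact hx (inv_eq_one.mp (by rw [← inv_pow, hh]))
          · rw [inv_inv]⟩ } with hM
  have hmatch : M.IsMatching := by
    intro v hv
    rcases hv with (rfl | rfl) | hvS
    · refine ⟨t, Or.inl ⟨rfl, rfl⟩, ?_⟩
      rintro w (⟨_, rfl⟩ | ⟨h1, _⟩ | ⟨h1, _⟩)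
      · rfl
      · exact absurd h1.symm ht1
      · exact absurd (one_pow 2) h1
    · refine ⟨1, Or.inr (Or.inl ⟨rfl, rfl⟩), ?_⟩
      rintro w (⟨h1, _⟩ | ⟨_, rfl⟩ | ⟨h1, _⟩)
      · exact absurd h1 ht1
      · rfl
      · exact absurd ht2 h1
    · refine ⟨v⁻¹, Or.inr (Or.inr ⟨hvS, rfl⟩), ?_⟩
      rintro w (⟨h1, _⟩ | ⟨h1, _⟩ | ⟨_, rfl⟩)
      · exact absurd (by rw [h1, one_pow]) hvS
      · exact absurd (by rw [h1]; exact ht2) hvS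
      · rfl
  -- cardinality of verts
  have hdisj : Disjoint ({1, t} : Set G) S := by
    rw [Set.disjoint_left]
    rintro x (rfl | rfl) hxS
    · exact hxS (one_pow 2)
    · exact hxS ht2
  have hverts : M.verts.ncard = 2 + S.ncard := by
    rw [hM]
    show (({1, t} : Set G) ∪ S).ncard = 2 + S.ncard
    rw [Set.ncard_union_eq hdisj (Set.toFinite _) (Set.toFinite _)]
    congr 1
    rw [Set.ncard_insert_of_notMem (by simpa using ht1.symm) (Set.toFinite _),
      Set.ncard_singleton]
  have hScard : S.ncard = Fintype.card G - {g : G | g ^ 2 = 1}.ncard := by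
    have hcompl : S = {g : G | g ^ 2 = 1}ᶜ := by
      ext g; simp [hS]
    have := Set.ncard_add_ncard_compl {g : G | g ^ 2 = 1}
    rw [hcompl]
    rw [Nat.card_eq_fintype_card] at this
    omega
  have hineq := verts_le_two_mul_edges M hmatch
  have key : 1 + (Fintype.card G - {g : G | g ^ 2 = 1}.ncard) / 2 ≤ M.edgeSet.ncard := by
    rw [← hScard]
    omega
  refine le_trans key ?_
  apply le_csSup
  · refine ⟨Nat.card (Sym2 G), ?_⟩
    rintro n ⟨N, _, rfl⟩
    rw [← Set.ncard_univ]
    exact Set.ncard_le_ncard (Set.subset_univ _) Set.finite_univ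
  · exact ⟨M, hmatch, rfl⟩
end

section
/- If G is a finite group with a unique involution, then the power graph of G has a perfect matching. -/
open SimpleGraph

theorem stmt3 (G : Type*) [Group G] [Fintype G] (h : ∃! t : G, orderOf t = 2) :
    hasPerfectMatching (powerGraph G) := by
  obtain ⟨t, ht, huniq⟩ := h
  have ht1 : t ≠ 1 := by
    intro e
    rw [e, orderOf_one] at ht
    exact absurd ht (by norm_num)
  have htsq : t ^ 2 = 1 := by rw [← ht]; exact pow_orderOf_eq_one t
  have hsq : ∀ x : G, x ^ 2 = 1 → x ≠ 1 → x = t := by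
    intro x hx hx1
    apply huniq
    haveI : Fact (Nat.Prime 2) := ⟨Nat.prime_two⟩
    exact orderOf_eq_prime hx hx1
  classical
  set f : G → G := fun x => if x = 1 then t else if x = t then 1 else x⁻¹ with hf
  have hf1 : f 1 = t := by simp [hf]
  have hft : f t = 1 := by simp [hf, ht1]
  have hfo : ∀ x : G, x ≠ 1 → x ≠ t → f x = x⁻¹ := by
    intro x h1 h2; simp [hf, h1, h2]
  have hinv : ∀ x, f (f x) = x := by
    intro x
    by_cases h1 : x = 1
    · rw [h1, hf1, hft]
    by_cases h2 : x = t
    · rw [h2, hft, hf1]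
    · rw [hfo x h1 h2]
      have hi1 : x⁻¹ ≠ 1 := by simpa using h1
      have hi2 : x⁻¹ ≠ t := by
        intro e
        apply h2
        have : x = t⁻¹ := by rw [← e, inv_inv]
        rw [this]
        rw [inv_eq_iff_mul_eq_one, ← pow_two]; exact htsq
      rw [hfo _ hi1 hi2, inv_inv]
  have hadj : ∀ x, (powerGraph G).Adj x (f x) := by
    intro x
    by_cases h1 : x = 1
    · rw [h1, hf1]
      exact ⟨ht1.symm, Or.inl ⟨2, htsq⟩⟩
    by_cases h2 : x = t
    · rw [h2, hft]
      exact ⟨ht1, Or.inr ⟨2, htsq⟩⟩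
    · rw [hfo x h1 h2]
      have hne : x ≠ x⁻¹ := by
        intro e
        have : x ^ 2 = 1 := by rw [pow_two]; nth_rewrite 2 [e]; simp
        exact h2 (hsq x this h1)
      refine ⟨hne, Or.inr ⟨orderOf x - 1, ?_⟩⟩
      have hpos : 0 < orderOf x := orderOf_pos x
      have : x ^ (orderOf x - 1) * x = 1 := by
        rw [← pow_succ, Nat.sub_add_cancel hpos, pow_orderOf_eq_one]
      exact eq_inv_of_mul_eq_one_left this
  refine ⟨⟨Set.univ, fun x y => f x = y, ?_, ?_, ?_⟩, ?_, ?_⟩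
  · intro x y (e : f x = y)
    rw [← e]; exact hadj x
  · intro x y _; trivial
  · refine ⟨fun x y (e : f x = y) => ?_⟩
    show f y = x
    rw [← e, hinv]
  · intro v _
    exact ⟨f v, rfl, fun w hw => Eq.symm hw⟩
  · intro v; trivial
end

section
/- Let G be a finite group of even order, I(G) its set of involutions, and O(G) its set of elements of odd order. Then every matching in the power graph of G leaves at least |I(G)| - |O(G)| vertices unmatched. -/
open SimpleGraph

section Aux

variable {G : Type*} [Group G] [Fintype G]

lemma orderOf_half_pow {x : G} (hx : Even (orderOf x)) :
    orderOf (x ^ (orderOf x / 2)) = 2 := by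
  obtain ⟨k, hk⟩ := hx
  have hk2 : orderOf x = 2 * k := by omega
  have hkpos : 0 < k := by have := orderOf_pos x; omega
  rw [orderOf_pow, hk2, show 2 * k / 2 = k by omega]
  have hg : Nat.gcd (2 * k) k = k := by
    simpa using Nat.gcd_mul_right 2 1 k
  rw [hg, Nat.mul_div_cancel _ hkpos]

lemma invol_unique {x s : G} (hs : ∃ n : ℕ, x ^ n = s)
    (ho : orderOf s = 2) : s = x ^ (orderOf x / 2) := by
  obtain ⟨a, rfl⟩ := hs
  have h1 : (x ^ a) ^ 2 = 1 := by rw [← ho]; exact pow_orderOf_eq_one _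
  have hdvd : orderOf x ∣ a * 2 := orderOf_dvd_of_pow_eq_one (by rw [pow_mul]; exact h1)
  have hnd : ¬ orderOf x ∣ a := by
    intro hd
    have hx1 : x ^ a = 1 := orderOf_dvd_iff_pow_eq_one.mp hd
    rw [hx1, orderOf_one] at ho
    exact absurd ho (by norm_num)
  have heven : Even (orderOf x) := by
    by_contra hodd
    rw [Nat.not_even_iff_odd] at hodd
    have hcop : Nat.Coprime (orderOf x) 2 := by
      exact hodd.coprime_two_right
    exact hnd (hcop.dvd_of_dvd_mul_right hdvd)
  obtain ⟨e, he⟩ := heven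
  have hepos : 0 < e := by have := orderOf_pos x; omega
  have hed : e ∣ a := by
    have h2 : 2 * e ∣ 2 * a := by
      have hdvd' : orderOf x ∣ 2 * a := by rwa [mul_comm a 2] at hdvd
      rwa [show orderOf x = 2 * e from by omega] at hdvd'
    exact (mul_dvd_mul_iff_left (two_ne_zero)).mp h2
  obtain ⟨k, hk⟩ := hed
  have hz2 : orderOf (x ^ e) = 2 := by
    have := orderOf_half_pow (x := x) ⟨e, he⟩
    rwa [show orderOf x / 2 = e by omega] at this
  have hkodd : Odd k := by
    rcases Nat.even_or_odd k with hke | hko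
    · exfalso
      have h2k : orderOf (x ^ e) ∣ k := by rw [hz2]; exact hke.two_dvd
      have hek : (x ^ e) ^ k = 1 := orderOf_dvd_iff_pow_eq_one.mp h2k
      have hxa : x ^ a = 1 := by rw [hk, pow_mul, hek]
      exact hnd (orderOf_dvd_iff_pow_eq_one.mpr hxa)
    · exact hko
  obtain ⟨m, hm⟩ := hkodd
  have h1' : (x ^ e) ^ 2 = 1 := by rw [← hz2]; exact pow_orderOf_eq_one _
  have hxe : x ^ a = x ^ e := by
    rw [hk, pow_mul, hm, pow_add, pow_mul, h1', one_pow, one_mul, pow_one]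
  rw [hxe, show orderOf x / 2 = e by omega]

lemma adj_half_eq {x y : G} (hadj : (powerGraph G).Adj x y)
    (hx : Even (orderOf x)) (hy : Even (orderOf y)) :
    x ^ (orderOf x / 2) = y ^ (orderOf y / 2) := by
  obtain ⟨-, h | h⟩ := hadj
  · obtain ⟨n, rfl⟩ := h
    exact invol_unique ⟨n * (orderOf (y ^ n) / 2), by rw [pow_mul]⟩ (orderOf_half_pow hx)
  · obtain ⟨n, rfl⟩ := h
    exact (invol_unique ⟨n * (orderOf (x ^ n) / 2), by rw [pow_mul]⟩ (orderOf_half_pow hy)).symm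

lemma even_card_fpf {α : Type*} [DecidableEq α] (f : α → α) :
    ∀ s : Finset α, (∀ x ∈ s, f x ∈ s) → (∀ x ∈ s, f (f x) = x) → (∀ x ∈ s, f x ≠ x) →
      Even s.card := by
  intro s
  induction s using Finset.strongInduction with
  | _ s ih =>
    intro hmem hinv hne
    rcases s.eq_empty_or_nonempty with rfl | ⟨a, ha⟩
    · simp
    · have hfa := hmem a ha
      have hfa' := hne a ha
      have hxs : ∀ x ∈ (s.erase a).erase (f a), x ∈ s := fun x hx =>
        Finset.mem_of_mem_erase (Finset.mem_of_mem_erase hx)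
      have hss : (s.erase a).erase (f a) ⊂ s := by
        refine (Finset.ssubset_iff_of_subset fun x hx => hxs x hx).mpr ⟨a, ha, ?_⟩
        simp
      have hmem' : ∀ x ∈ (s.erase a).erase (f a), f x ∈ (s.erase a).erase (f a) := by
        intro x hx
        have hxS := hxs x hx
        rw [Finset.mem_erase, Finset.mem_erase] at hx ⊢
        refine ⟨?_, ?_, hmem x hxS⟩
        · intro hfx
          apply hx.2.1
          have h := hinv x hxS
          rw [hfx, hinv a ha] at h
          exact h.symm
        · intro hfx
          apply hx.1
          have h := hinv x hxS
          rw [hfx] at h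
          exact h.symm
      have hcard : s.card = ((s.erase a).erase (f a)).card + 2 := by
        rw [Finset.card_erase_of_mem (Finset.mem_erase.mpr ⟨hfa', hfa⟩),
          Finset.card_erase_of_mem ha]
        have h2 : 1 < s.card := Finset.one_lt_card.mpr ⟨a, ha, f a, hfa, fun h => hfa' h.symm⟩
        omega
      obtain ⟨m, hm⟩ := ih _ hss hmem' (fun x hx => hinv x (hxs x hx))
        (fun x hx => hne x (hxs x hx))
      exact ⟨m + 1, by omega⟩

def Pm (M : (powerGraph G).Subgraph) (t z : G) : Prop :=
  (z ∉ M.verts ∧ Even (orderOf z) ∧ z ^ (orderOf z / 2) = t) ∨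
  (Odd (orderOf z) ∧ ∃ x, M.Adj z x ∧ Even (orderOf x) ∧ x ^ (orderOf x / 2) = t)

lemma exists_Pm {M : (powerGraph G).Subgraph} (hM : M.IsMatching) {t : G}
    (ht : orderOf t = 2) : ∃ z, Pm M t z := by
  classical
  by_contra hno
  push_neg at hno
  set S : Finset G := Finset.univ.filter (fun x => Even (orderOf x) ∧ x ^ (orderOf x / 2) = t)
    with hS
  have htS : t ∈ S := by
    rw [hS, Finset.mem_filter]
    refine ⟨Finset.mem_univ _, ?_, ?_⟩ <;> rw [ht]
    · exact even_two
    · norm_num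
  have hmemv : ∀ z ∈ S, z ∈ M.verts := by
    intro z hz
    by_contra hzv
    exact hno z (Or.inl ⟨hzv, (Finset.mem_filter.mp hz).2⟩)
  set p : G → G := fun z => if h : ∃ w, M.Adj z w then h.choose else z with hp
  have hpadj : ∀ z ∈ M.verts, M.Adj z (p z) := by
    intro z hz
    obtain ⟨w, hw, -⟩ := hM hz
    rw [hp]
    dsimp only
    rw [dif_pos ⟨w, hw⟩]
    exact (⟨w, hw⟩ : ∃ w, M.Adj z w).choose_spec
  have hpS : ∀ z ∈ S, p z ∈ S := by
    intro z hz
    have hadj := hpadj z (hmemv z hz)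
    have hzprop := (Finset.mem_filter.mp hz).2
    have hpe : Even (orderOf (p z)) := by
      by_contra hodd
      rw [Nat.not_even_iff_odd] at hodd
      exact hno (p z) (Or.inr ⟨hodd, z, M.adj_symm hadj, hzprop.1, hzprop.2⟩)
    have heq := adj_half_eq (M.adj_sub hadj) hzprop.1 hpe
    exact Finset.mem_filter.mpr ⟨Finset.mem_univ _, hpe, by rw [← heq, hzprop.2]⟩
  have hpne : ∀ z ∈ S, p z ≠ z := by
    intro z hz heq
    exact (M.adj_sub (hpadj z (hmemv z hz))).1 heq.symm
  have hpp : ∀ z ∈ S, p (p z) = z := by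
    intro z hz
    have hadj := hpadj z (hmemv z hz)
    have hpz : p z ∈ M.verts := M.edge_vert (M.adj_symm hadj)
    obtain ⟨w, hw, huniq⟩ := hM hpz
    rw [huniq _ (hpadj (p z) hpz), huniq _ (M.adj_symm hadj)]
  have heven := even_card_fpf p S hpS hpp hpne
  have htinv : t⁻¹ = t := by
    rw [inv_eq_iff_mul_eq_one, ← pow_two, ← ht]
    exact pow_orderOf_eq_one t
  have hsub : ∀ x ∈ S.erase t, x⁻¹ ∈ S.erase t := by
    intro x hx
    obtain ⟨hxt, hxS⟩ := Finset.mem_erase.mp hx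
    have hxprop := (Finset.mem_filter.mp hxS).2
    refine Finset.mem_erase.mpr ⟨?_, ?_⟩
    · intro hxi
      apply hxt
      rw [← htinv, ← hxi, inv_inv]
    · refine Finset.mem_filter.mpr ⟨Finset.mem_univ _, ?_, ?_⟩
      · rw [orderOf_inv]; exact hxprop.1
      · rw [orderOf_inv, inv_pow, hxprop.2, htinv]
  have hne' : ∀ x ∈ S.erase t, x⁻¹ ≠ x := by
    intro x hx heq
    obtain ⟨hxt, hxS⟩ := Finset.mem_erase.mp hx
    have hxprop := (Finset.mem_filter.mp hxS).2
    have hx2 : x ^ 2 = 1 := by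
      rw [pow_two]
      nth_rewrite 1 [← heq]
      exact inv_mul_cancel x
    have hdvd : orderOf x ∣ 2 := orderOf_dvd_of_pow_eq_one hx2
    have hox : orderOf x = 2 := by
      rcases (Nat.dvd_prime Nat.prime_two).mp hdvd with h1 | h2
      · exact absurd (h1 ▸ hxprop.1) (by norm_num)
      · exact h2
    apply hxt
    have hxx := hxprop.2
    rw [hox] at hxx
    simpa using hxx
  have hodd' : ¬ Even S.card := by
    have he := even_card_fpf (fun x => x⁻¹) (S.erase t) hsub (fun x _ => inv_inv x) hne'
    rw [← Finset.card_erase_add_one htS]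
    simpa [Nat.even_add_one] using he
  exact hodd' heven

lemma Pm_inj {M : (powerGraph G).Subgraph} (hM : M.IsMatching) {t t' z : G}
    (h1 : Pm M t z) (h2 : Pm M t' z) : t = t' := by
  rcases h1 with ⟨hz, _, hzt⟩ | ⟨hoz, x, hx, _, hxt⟩
  · rcases h2 with ⟨_, _, hzt'⟩ | ⟨_, x', hx', _, _⟩
    · rw [← hzt, hzt']
    · exact absurd (M.edge_vert hx') hz
  · rcases h2 with ⟨hz', _, _⟩ | ⟨_, x', hx', _, hxt'⟩
    · exact absurd (M.edge_vert hx) hz'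
    · obtain ⟨w, hw, huniq⟩ := hM (M.edge_vert hx)
      have hxx : x = x' := by rw [huniq x hx, huniq x' hx']
      rw [← hxt, hxx, hxt']

end Aux

theorem stmt4 (G : Type*) [Group G] [Fintype G] (h : Even (Fintype.card G))
    (M : (powerGraph G).Subgraph) (hM : M.IsMatching) :
    {t : G | orderOf t = 2}.ncard - {x : G | Odd (orderOf x)}.ncard ≤ M.vertsᶜ.ncard := by
  classical
  rw [tsub_le_iff_right]
  set f : G → G := fun t => if h : ∃ z, Pm M t z then h.choose else 1 with hf
  have hfP : ∀ t : G, orderOf t = 2 → Pm M t (f t) := by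
    intro t ht
    have hex := exists_Pm hM ht
    rw [hf]
    dsimp only
    rw [dif_pos hex]
    exact hex.choose_spec
  have hinj : Set.InjOn f {t : G | orderOf t = 2} := by
    intro a ha b hb hab
    exact Pm_inj hM (hfP a ha) (hab ▸ hfP b hb)
  have himg : f '' {t : G | orderOf t = 2} ⊆ M.vertsᶜ ∪ {x : G | Odd (orderOf x)} := by
    rintro _ ⟨t, ht, rfl⟩
    rcases hfP t ht with ⟨hz, _, _⟩ | ⟨hoz, _⟩
    · exact Or.inl hz
    · exact Or.inr hoz
  calc {t : G | orderOf t = 2}.ncard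
      = (f '' {t : G | orderOf t = 2}).ncard := (Set.ncard_image_of_injOn hinj).symm
    _ ≤ (M.vertsᶜ ∪ {x : G | Odd (orderOf x)}).ncard :=
        Set.ncard_le_ncard himg (Set.toFinite _)
    _ ≤ M.vertsᶜ.ncard + {x : G | Odd (orderOf x)}.ncard := Set.ncard_union_le _ _
end

section
/- Let G be a finite group of even order. If the power graph of G has a perfect matching, then the number of involutions in G is at most the number of elements of odd order in G. -/
open SimpleGraph

section Aux

variable {G : Type*} [Group G] [Fintype G]

/-- An element of order 2 that is a power of `x` is `x ^ (orderOf x / 2)`. -/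
lemma aux_pow_order_two {x : G} {m : ℕ} (h : orderOf (x ^ m) = 2) :
    x ^ m = x ^ (orderOf x / 2) := by
  have hgcd : orderOf (x ^ m) = orderOf x / Nat.gcd (orderOf x) m := orderOf_pow x
  rw [h] at hgcd
  set o := orderOf x with ho
  set d := Nat.gcd o m with hd
  have hdo : d ∣ o := Nat.gcd_dvd_left o m
  have hdm : d ∣ m := Nat.gcd_dvd_right o m
  have ho2 : o = 2 * d := by
    have := Nat.div_mul_cancel hdo
    rw [← hgcd] at this
    omega
  obtain ⟨s, hs⟩ := hdm
  have hx2d : x ^ (2 * d) = 1 := by rw [← ho2]; exact pow_orderOf_eq_one x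
  have key : x ^ m = x ^ (d * (s % 2)) := by
    conv_lhs => rw [hs, ← Nat.div_add_mod s 2]
    rw [Nat.mul_add, pow_add]
    have h1 : d * (2 * (s / 2)) = 2 * d * (s / 2) := by ring
    rw [h1, pow_mul, hx2d, one_pow, one_mul]
  rcases Nat.mod_two_eq_zero_or_one s with hp | hp
  · exfalso
    rw [hp, Nat.mul_zero, pow_zero] at key
    rw [key, orderOf_one] at h
    omega
  · rw [hp, Nat.mul_one] at key
    rw [key, ho2]
    congr 1
    omega

/-- Uniqueness of the involution in a cyclic subgroup. -/
lemma uniq_invol {x a b : G} (ha : ∃ n : ℕ, x ^ n = a) (hb : ∃ n : ℕ, x ^ n = b)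
    (ha2 : orderOf a = 2) (hb2 : orderOf b = 2) : a = b := by
  obtain ⟨m, rfl⟩ := ha
  obtain ⟨k, rfl⟩ := hb
  rw [aux_pow_order_two ha2, aux_pow_order_two hb2]

lemma half_invol {y : G} (he : Even (orderOf y)) (hy : y ≠ 1) :
    orderOf (y ^ (orderOf y / 2)) = 2 := by
  have hopos : 0 < orderOf y := orderOf_pos y
  obtain ⟨k, hk⟩ := he
  have hkpos : 0 < k := by omega
  have h2 : orderOf y = 2 * k := by omega
  have hhalf : orderOf y / 2 = k := by omega
  rw [orderOf_pow, hhalf, h2, Nat.gcd_eq_right (dvd_mul_left k 2), Nat.mul_div_cancel 2 hkpos]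

/-- If `x` lies in the block of the involution `t`, and `y` is a power-graph neighbor of `x`
outside the block, then `y` has odd order. -/
lemma escape_odd {t x y : G} (ht : orderOf t = 2) (hx : ∃ n : ℕ, x ^ n = t)
    (hadj : (powerGraph G).Adj x y) (hy : ¬ ∃ n : ℕ, y ^ n = t) : Odd (orderOf y) := by
  obtain ⟨hne, hp⟩ := hadj
  obtain ⟨mm, hmm⟩ := hx
  rcases hp with ⟨n, hn⟩ | ⟨n, hn⟩
  · exact absurd ⟨n * mm, by rw [pow_mul, hn, hmm]⟩ hy
  · rcases Nat.even_or_odd (orderOf y) with he | ho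
    · exfalso
      have hy1 : y ≠ 1 := by
        rintro rfl
        apply hy
        have ht1 : t ≠ 1 := by intro h; rw [h, orderOf_one] at ht; omega
        exfalso
        -- y = 1 has odd order 1, contradiction with he
        rw [orderOf_one] at he
        exact (Nat.not_even_one) he
      have hs2 : orderOf (y ^ (orderOf y / 2)) = 2 := half_invol he hy1
      have hspow : ∃ k : ℕ, x ^ k = y ^ (orderOf y / 2) :=
        ⟨n * (orderOf y / 2), by rw [pow_mul, hn]⟩
      have := uniq_invol hspow ⟨mm, hmm⟩ hs2 ht
      exact hy ⟨orderOf y / 2, this⟩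
    · exact ho

lemma even_card_aux {α : Type*} (s : Finset α) (g : α → α)
    (hmem : ∀ a ∈ s, g a ∈ s) (hne : ∀ a ∈ s, g a ≠ a)
    (hgg : ∀ a ∈ s, g (g a) = a) : Even s.card := by
  classical
  have h : ∑ _x ∈ s, (1 : ZMod 2) = 0 :=
    Finset.sum_involution (fun a _ => g a) (fun a _ => by decide)
      (fun a ha _ => hne a ha) (fun a ha => hmem a ha) (fun a ha => hgg a ha)
  rw [Finset.sum_const, nsmul_eq_mul, mul_one] at h
  have hdvd : (2 : ℕ) ∣ s.card := (ZMod.natCast_eq_zero_iff s.card 2).mp h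
  exact even_iff_two_dvd.mpr hdvd

/-- Given a fixed-point-free involution `m` of `G` moving along power-graph edges only within
blocks is impossible: some element of the block of `t` escapes. -/
lemma exists_escape (m : G → G) (hfix : ∀ v, m v ≠ v) (hinv : ∀ v, m (m v) = v)
    {t : G} (ht : orderOf t = 2)
    (hmB : ∀ x, (∃ n : ℕ, x ^ n = t) → ∃ n : ℕ, (m x) ^ n = t) : False := by
  classical
  set Bf : Finset G := Finset.univ.filter (fun x => ∃ n : ℕ, x ^ n = t) with hBf
  have hmemBf : ∀ x, x ∈ Bf ↔ ∃ n : ℕ, x ^ n = t := by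
    intro x; simp [hBf]
  have htB : t ∈ Bf := (hmemBf t).mpr ⟨1, pow_one t⟩
  have ht1 : t ≠ 1 := by intro h; rw [h, orderOf_one] at ht; omega
  have htinv : t⁻¹ = t := by
    have h2 : t ^ 2 = 1 := by rw [← ht]; exact pow_orderOf_eq_one t
    rw [pow_two] at h2
    exact inv_eq_of_mul_eq_one_right h2
  have hEven1 : Even Bf.card :=
    even_card_aux Bf m (fun x hx => (hmemBf _).mpr (hmB x ((hmemBf x).mp hx)))
      (fun a _ => hfix a) (fun a _ => hinv a)
  have hEven2 : Even (Bf \ {t}).card := by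
    apply even_card_aux _ (fun x => x⁻¹)
    · intro a ha
      rw [Finset.mem_sdiff, Finset.mem_singleton] at ha ⊢
      obtain ⟨haB, hat⟩ := ha
      obtain ⟨n, hn⟩ := (hmemBf a).mp haB
      have ha1 : a ≠ 1 := by rintro rfl; exact ht1 (by simpa using hn.symm)
      have hopos : 0 < orderOf a := orderOf_pos a
      have hkey : a⁻¹ ^ (orderOf a - 1) = a := by
        have hstep : a ^ (orderOf a - 1) = a⁻¹ := by
          apply eq_inv_of_mul_eq_one_left
          rw [← pow_succ]
          have : orderOf a - 1 + 1 = orderOf a := by omega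
          rw [this]
          exact pow_orderOf_eq_one a
        rw [inv_pow, hstep, inv_inv]
      constructor
      · exact (hmemBf _).mpr ⟨(orderOf a - 1) * n, by rw [pow_mul, hkey, hn]⟩
      · intro h
        apply hat
        rw [← inv_inv a, h, htinv]
    · intro a ha h
      rw [Finset.mem_sdiff, Finset.mem_singleton] at ha
      obtain ⟨haB, hat⟩ := ha
      obtain ⟨n, hn⟩ := (hmemBf a).mp haB
      have ha2 : a ^ 2 = 1 := by rw [pow_two]; nth_rewrite 1 [← h]; exact inv_mul_cancel a
      have hdvd : orderOf a ∣ 2 := orderOf_dvd_of_pow_eq_one ha2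
      have ha1 : a ≠ 1 := by rintro rfl; exact ht1 (by simpa using hn.symm)
      have ho2 : orderOf a = 2 := by
        rcases (Nat.dvd_prime Nat.prime_two).mp hdvd with h1 | h2
        · exact absurd (orderOf_eq_one_iff.mp h1) ha1
        · exact h2
      exact hat (uniq_invol ⟨1, pow_one a⟩ ⟨n, hn⟩ ho2 ht)
    · intro a _; exact inv_inv a
  have hsub : {t} ⊆ Bf := Finset.singleton_subset_iff.mpr htB
  have hcard : (Bf \ {t}).card = Bf.card - 1 := by
    rw [Finset.card_sdiff_of_subset hsub, Finset.card_singleton]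
  have hpos : 0 < Bf.card := Finset.card_pos.mpr ⟨t, htB⟩
  obtain ⟨p, hp⟩ := hEven1
  obtain ⟨q, hq⟩ := hEven2
  omega

end Aux

theorem stmt5 (G : Type*) [Group G] [Fintype G] (h : Even (Fintype.card G))
    (hpm : hasPerfectMatching (powerGraph G)) :
    {t : G | orderOf t = 2}.ncard ≤ {x : G | Odd (orderOf x)}.ncard := by
  classical
  obtain ⟨M, hM, hSp⟩ := hpm
  choose m hm huniq using fun v => hM (hSp v)
  have hfix : ∀ v, m v ≠ v := fun v => ((M.adj_sub (hm v)).ne).symm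
  have hmm : ∀ v, m (m v) = v := fun v => (huniq (m v) v ((hm v).symm)).symm
  have hesc : ∀ t : G, ∃ x, orderOf t = 2 →
      ((∃ n : ℕ, x ^ n = t) ∧ ¬ ∃ n : ℕ, (m x) ^ n = t) := by
    intro t
    by_cases ht : orderOf t = 2
    · by_contra hcon
      push_neg at hcon
      apply exists_escape m hfix hmm ht
      intro x hx
      exact (hcon x).2 hx
    · exact ⟨1, fun h' => absurd h' ht⟩
  choose xf hxf using hesc
  apply Set.ncard_le_ncard_of_injOn (fun t => m (xf t))
  · intro t htI
    obtain ⟨hx, hnx⟩ := hxf t htI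
    exact escape_odd htI hx (M.adj_sub (hm (xf t))) hnx
  · intro t htI s hsI hts
    have hx : xf t = xf s := by
      have := congrArg m hts
      rwa [hmm, hmm] at this
    obtain ⟨hxt, _⟩ := hxf t htI
    obtain ⟨hxs, _⟩ := hxf s hsI
    rw [hx] at hxt
    exact uniq_invol hxt hxs htI hsI
end

section
/- Let G be a finite group of even order and let t be an involution of G. Then the set C_t = {x ∈ G : t ∈ ⟨x⟩} is a connected component of the subgraph of the power graph of G induced on the set of elements of even order, and |C_t| is odd. -/
open SimpleGraph

/-- An involution in a cyclic group `⟨x⟩` equals `x ^ (orderOf x / 2)`. -/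
lemma invol_eq_pow {G : Type*} [Group G] [Fintype G] {x t : G} (ht : orderOf t = 2)
    (hx : t ∈ Subgroup.zpowers x) : t = x ^ (orderOf x / 2) := by
  obtain ⟨k, hk'⟩ := mem_powers_iff_mem_zpowers.mpr hx
  have hk : x ^ k = t := hk'
  have hne1 : t ≠ 1 := by
    intro h; rw [h, orderOf_one] at ht; omega
  have horder : orderOf t = orderOf x / Nat.gcd (orderOf x) k := by
    rw [← hk]; exact orderOf_pow x
  set n := orderOf x with hn
  set d := Nat.gcd n k with hd
  have hdn : d ∣ n := Nat.gcd_dvd_left n k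
  have hdk : d ∣ k := Nat.gcd_dvd_right n k
  have hnpos : 0 < n := orderOf_pos x
  have hdpos : 0 < d := Nat.gcd_pos_of_pos_left k hnpos
  have h2 : n / d = 2 := by rw [← horder, ht]
  have hnd : n = d * 2 := (Nat.eq_mul_of_div_eq_right hdn h2)
  have hxd : orderOf (x ^ d) = 2 := by
    rw [orderOf_pow x, ← hn, Nat.gcd_eq_right hdn, hnd, Nat.mul_div_cancel_left 2 hdpos]
  obtain ⟨j, hj⟩ := hdk
  have hkj : x ^ k = (x ^ d) ^ j := by rw [← pow_mul, hj]
  have hn2 : n / 2 = d := by omega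
  rw [hn2]
  rcases Nat.even_or_odd j with hj2 | hj2
  · exfalso
    have hone : (x ^ d) ^ j = 1 := by
      apply orderOf_dvd_iff_pow_eq_one.mp
      rw [hxd]; exact hj2.two_dvd
    rw [hkj, hone] at hk; exact hne1 hk.symm
  · obtain ⟨m, hm⟩ := hj2
    have hsq : (x ^ d) ^ 2 = 1 := by rw [← hxd]; exact pow_orderOf_eq_one _
    rw [← hk, hkj, hm, pow_add, pow_mul, hsq, one_pow, one_mul, pow_one]

lemma invol_unique_s6 {G : Type*} [Group G] [Fintype G] {x s u : G} (hs : orderOf s = 2)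
    (hu : orderOf u = 2) (hsx : s ∈ Subgroup.zpowers x) (hux : u ∈ Subgroup.zpowers x) :
    s = u := by
  rw [invol_eq_pow hs hsx, invol_eq_pow hu hux]

/-- Closure of `C_t` under adjacency among even-order elements. -/
lemma adj_closure {G : Type*} [Group G] [Fintype G] {t x y : G} (ht : orderOf t = 2)
    (hy : Even (orderOf y)) (hadj : (powerGraph G).Adj x y) (hx : t ∈ Subgroup.zpowers x) :
    t ∈ Subgroup.zpowers y := by
  obtain ⟨-, hp | hp⟩ := hadj
  · obtain ⟨n, hn⟩ := hp
    have hle : Subgroup.zpowers x ≤ Subgroup.zpowers y := by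
      rw [Subgroup.zpowers_le]
      exact ⟨(n : ℤ), by simpa using hn⟩
    exact hle hx
  · obtain ⟨n, hn⟩ := hp
    have hyx : Subgroup.zpowers y ≤ Subgroup.zpowers x := by
      rw [Subgroup.zpowers_le]
      exact ⟨(n : ℤ), by simpa using hn⟩
    set s := y ^ (orderOf y / 2) with hsdef
    have hypos : 0 < orderOf y := orderOf_pos y
    obtain ⟨m, hm⟩ := hy
    have hmpos : 0 < m := by omega
    have hgcd : Nat.gcd (orderOf y) m = m := Nat.gcd_eq_right ⟨2, by omega⟩
    have hsord : orderOf s = 2 := by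
      rw [hsdef, orderOf_pow y]
      have h1 : orderOf y / 2 = m := by omega
      rw [h1, hgcd, hm, show m + m = m * 2 by ring, Nat.mul_div_cancel_left 2 hmpos]
    have hsy : s ∈ Subgroup.zpowers y :=
      mem_powers_iff_mem_zpowers.mp ⟨orderOf y / 2, rfl⟩
    have hts : t = s := invol_unique_s6 ht hsord hx (hyx hsy)
    rw [hts]; exact hsy

theorem stmt6 (G : Type*) [Group G] [Fintype G] (h : Even (Fintype.card G))
    (t : G) (ht : orderOf t = 2) :
    (∃ c : (SimpleGraph.induce {x : G | Even (orderOf x)} (powerGraph G)).ConnectedComponent,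
      c.supp = {x : {x : G // Even (orderOf x)} | t ∈ Subgroup.zpowers (x : G)}) ∧
    Odd {x : G | t ∈ Subgroup.zpowers x}.ncard := by
  have ht1 : t ≠ 1 := by intro h1; rw [h1, orderOf_one] at ht; omega
  have htE : Even (orderOf t) := by rw [ht]; exact even_two
  -- anyone with t ∈ ⟨a⟩ and a⁻¹ = a must be t
  have key : ∀ a : G, t ∈ Subgroup.zpowers a → a⁻¹ = a → a = t := by
    intro a hta hinv
    have ha2 : a ^ 2 = 1 := by
      rw [pow_two]; exact mul_eq_one_iff_inv_eq.mpr hinv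
    have hane : a ≠ 1 := by
      rintro rfl
      simp only [Subgroup.zpowers_one_eq_bot, Subgroup.mem_bot] at hta
      exact ht1 hta
    have haord : orderOf a = 2 := by
      have hdvd : orderOf a ∣ 2 := orderOf_dvd_iff_pow_eq_one.mpr ha2
      rcases (Nat.dvd_prime Nat.prime_two).mp hdvd with h1 | h1
      · exact absurd (orderOf_eq_one_iff.mp h1) hane
      · exact h1
    exact (invol_unique_s6 ht haord hta (Subgroup.mem_zpowers a)).symm
  constructor
  · refine ⟨(SimpleGraph.induce {x : G | Even (orderOf x)} (powerGraph G)).connectedComponentMk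
      ⟨t, htE⟩, ?_⟩
    ext x
    rw [SimpleGraph.ConnectedComponent.mem_supp_iff, SimpleGraph.ConnectedComponent.eq]
    constructor
    · rintro ⟨w⟩
      have aux : ∀ (a b : {x : G // Even (orderOf x)}),
          (SimpleGraph.induce {x : G | Even (orderOf x)} (powerGraph G)).Walk a b →
          t ∈ Subgroup.zpowers (b : G) → t ∈ Subgroup.zpowers (a : G) := by
        intro a b w
        induction w with
        | nil => exact id
        | cons hadj p ih =>
          rename_i u v w'
          intro hb
          have hv := ih hb
          have hadj' : (powerGraph G).Adj (v : G) (u : G) :=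
            (SimpleGraph.Adj.symm hadj : _)
          exact adj_closure ht u.2 hadj' hv
      exact aux x _ w (Subgroup.mem_zpowers t)
    · intro hx
      by_cases hxt : (x : G) = t
      · have hx' : x = ⟨t, htE⟩ := Subtype.ext hxt
        subst hx'
        exact SimpleGraph.Reachable.refl _
      · apply SimpleGraph.Adj.reachable
        show (powerGraph G).Adj (x : G) t
        exact ⟨fun h' => hxt h', Or.inr (mem_powers_iff_mem_zpowers.mpr hx)⟩
  · classical
    set S : Finset G := Finset.univ.filter (fun x => t ∈ Subgroup.zpowers x) with hS
    have hncard : {x : G | t ∈ Subgroup.zpowers x}.ncard = S.card := by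
      rw [Set.ncard_eq_toFinset_card']
      congr 1
      ext x; simp [hS]
    rw [hncard]
    have htS : t ∈ S := by simp [hS, Subgroup.mem_zpowers]
    have hmemS : ∀ a ∈ S.erase t, a ≠ t ∧ t ∈ Subgroup.zpowers a := by
      intro a ha
      rw [Finset.mem_erase, hS, Finset.mem_filter] at ha
      exact ⟨ha.1, ha.2.2⟩
    have htt : t⁻¹ = t := by
      rw [inv_eq_iff_mul_eq_one, ← pow_two, ← ht]
      exact pow_orderOf_eq_one t
    have g_mem : ∀ a ∈ S.erase t, a⁻¹ ∈ S.erase t := by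
      intro a ha
      rw [Finset.mem_erase, hS, Finset.mem_filter]
      obtain ⟨hat, hta⟩ := hmemS a ha
      refine ⟨?_, Finset.mem_univ _, ?_⟩
      · intro heq
        apply hat
        rw [← inv_inv a, heq, htt]
      · rw [Subgroup.zpowers_inv]; exact hta
    have hsum : ∑ _x ∈ S.erase t, (1 : ZMod 2) = 0 :=
      Finset.sum_involution (fun a _ => a⁻¹) (fun _ _ => by decide)
        (fun a ha _ heq => (hmemS a ha).1 (key a (hmemS a ha).2 heq))
        g_mem (fun a _ => inv_inv a)
    have heven : Even (S.erase t).card := by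
      have hcast : (((S.erase t).card : ℕ) : ZMod 2) = 0 := by
        rw [Finset.card_eq_sum_ones, Nat.cast_sum]
        simpa using hsum
      rw [ZMod.natCast_eq_zero_iff] at hcast
      exact (even_iff_two_dvd).mpr hcast
    have hcard := Finset.card_erase_of_mem htS
    have hpos : 0 < S.card := Finset.card_pos.mpr ⟨t, htS⟩
    obtain ⟨m, hm⟩ := heven
    exact ⟨m, by omega⟩
end

section
/- Let G be a finite group of even order, S the set of involutions of G, and O(C_G(S)) the set of elements of odd order in the centralizer of S. If |S| ≤ |O(C_G(S))|, then the power graph of G has a perfect matching. -/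
open SimpleGraph

/-- A fixed-point-free involution whose pairs are edges gives a perfect matching. -/
lemma pm_of_involutive {V : Type*} (Γ : SimpleGraph V) (f : V → V)
    (hf : Function.Involutive f) (hadj : ∀ a, Γ.Adj a (f a)) :
    hasPerfectMatching Γ := by
  refine ⟨{ verts := Set.univ, Adj := fun a b => b = f a ∨ a = f b,
            adj_sub := ?_, edge_vert := ?_, symm := ?_ }, ?_, fun _ => trivial⟩
  · rintro a b (rfl | rfl)
    · exact hadj a
    · exact (hadj b).symm
  · intro a b _; trivial
  · refine ⟨?_⟩; rintro a b (rfl | rfl)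
    · exact Or.inr rfl
    · exact Or.inl rfl
  · intro v _
    refine ⟨f v, Or.inl rfl, ?_⟩
    rintro w (rfl | rfl)
    · rfl
    · exact (hf w).symm

lemma even_card_invol {α : Type*} [DecidableEq α] (σ : α → α) (A : Finset α)
    (h1 : ∀ a ∈ A, σ a ∈ A) (h2 : ∀ a ∈ A, σ (σ a) = a) (h3 : ∀ a ∈ A, σ a ≠ a) :
    Even A.card := by
  induction A using Finset.strongInduction with
  | _ A ih =>
    rcases A.eq_empty_or_nonempty with rfl | ⟨a, ha⟩
    · simp
    · have hσa : σ a ∈ A := h1 a ha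
      have hne : σ a ≠ a := h3 a ha
      have hmem : σ a ∈ A.erase a := Finset.mem_erase.2 ⟨hne, hσa⟩
      set A' := (A.erase a).erase (σ a) with hA'
      have hsubA : A' ⊆ A := fun x hx =>
        Finset.mem_of_mem_erase (Finset.mem_of_mem_erase hx)
      have hss : A' ⊂ A := by
        refine Finset.ssubset_iff_of_subset hsubA |>.2 ⟨a, ha, ?_⟩
        intro hx
        exact (Finset.mem_erase.1 (Finset.mem_of_mem_erase hx)).1 rfl
      have hmemA' : ∀ x ∈ A', x ∈ A ∧ x ≠ a ∧ x ≠ σ a := by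
        intro x hx
        have h1' := Finset.mem_erase.1 hx
        have h2' := Finset.mem_erase.1 h1'.2
        exact ⟨h2'.2, h2'.1, h1'.1⟩
      have hec : Even A'.card := by
        refine ih A' hss ?_ ?_ ?_
        · intro x hx
          obtain ⟨hxA, hxa, hxσa⟩ := hmemA' x hx
          refine Finset.mem_erase.2 ⟨?_, Finset.mem_erase.2 ⟨?_, h1 x hxA⟩⟩
          · intro hc
            exact hxa (by rw [← h2 x hxA, hc, h2 a ha])
          · intro hc
            exact hxσa (by rw [← h2 x hxA, hc])
        · intro x hx; exact h2 x (hmemA' x hx).1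
        · intro x hx; exact h3 x (hmemA' x hx).1
      have hc1 : (A.erase a).card + 1 = A.card := Finset.card_erase_add_one ha
      have hc2 : A'.card + 1 = (A.erase a).card := Finset.card_erase_add_one hmem
      obtain ⟨k, hk⟩ := hec
      refine ⟨k + 1, by omega⟩

lemma select_inv {G : Type*} [Group G] [DecidableEq G] (p : ℕ) :
    ∀ A : Finset G, (∀ x ∈ A, x⁻¹ ∈ A) → (∀ x ∈ A, x⁻¹ ≠ x) → 2 * p ≤ A.card →
    ∃ X : Fin p → G, (∀ i, X i ∈ A) ∧ (∀ i k, i ≠ k → X i ≠ X k ∧ X i ≠ (X k)⁻¹) := by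
  induction p with
  | zero => exact fun A _ _ _ => ⟨fun i => i.elim0, fun i => i.elim0, fun i => i.elim0⟩
  | succ p ih =>
    intro A hinv hne hcard
    have hA : A.Nonempty := Finset.card_pos.1 (by omega)
    obtain ⟨a, ha⟩ := hA
    have hainv : a⁻¹ ∈ A := hinv a ha
    have hane : a⁻¹ ≠ a := hne a ha
    set A' := (A.erase a).erase a⁻¹ with hA'
    have hmemA' : ∀ x ∈ A', x ∈ A ∧ x ≠ a ∧ x ≠ a⁻¹ := by
      intro x hx
      have h1' := Finset.mem_erase.1 hx
      have h2' := Finset.mem_erase.1 h1'.2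
      exact ⟨h2'.2, h2'.1, h1'.1⟩
    have hc1 : (A.erase a).card + 1 = A.card := Finset.card_erase_add_one ha
    have hc2 : A'.card + 1 = (A.erase a).card :=
      Finset.card_erase_add_one (Finset.mem_erase.2 ⟨hane, hainv⟩)
    obtain ⟨X', hX1, hX2⟩ := ih A'
      (by
        intro x hx
        obtain ⟨hxA, hxa, hxai⟩ := hmemA' x hx
        refine Finset.mem_erase.2 ⟨?_, Finset.mem_erase.2 ⟨?_, hinv x hxA⟩⟩
        · intro hc; exact hxa (by rw [← inv_inv x, hc, inv_inv])
        · intro hc; exact hxai (by rw [← inv_inv x, hc]))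
      (fun x hx => hne x (hmemA' x hx).1)
      (by omega)
    refine ⟨Fin.cons a X', ?_, ?_⟩
    · intro i
      refine Fin.cases ?_ ?_ i
      · simpa using ha
      · intro k; simpa using (hmemA' _ (hX1 k)).1
    · intro i k
      refine Fin.cases ?_ ?_ i <;> [skip; (intro i')] <;> refine Fin.cases ?_ ?_ k <;>
        first
        | (intro hik; exact absurd rfl hik)
        | skip
      · intro k' _
        obtain ⟨_, _, hk2⟩ := hmemA' _ (hX1 k')
        constructor
        · simpa using fun hc => (hmemA' _ (hX1 k')).2.1 hc.symm
        · simp only [Fin.cons_zero, Fin.cons_succ]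
          intro hc
          exact hk2 (by rw [← inv_inv (X' k'), ← hc])
      · intro _
        obtain ⟨_, h1', h2'⟩ := hmemA' _ (hX1 i')
        constructor
        · simpa using h1'
        · simpa using h2'
      · intro k' hik
        have hik' : i' ≠ k' := by
          intro hc; rw [hc] at hik; exact hik rfl
        simpa using hX2 i' k' hik'

/-- Uniqueness of the (2-part, odd-part) decomposition. -/
lemma decomp_unique {G : Type*} [Group G] [Fintype G] {t x t' x' : G}
    (ht : t ^ 2 = 1) (ht' : t' ^ 2 = 1)
    (hx : Odd (orderOf x)) (hx' : Odd (orderOf x'))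
    (c : Commute t x) (c' : Commute t' x') (h : t * x = t' * x') :
    t = t' ∧ x = x' := by
  have hsq : x ^ 2 = x' ^ 2 := by
    have h2 := congrArg (· ^ 2) h
    simpa [c.mul_pow, c'.mul_pow, ht, ht'] using h2
  have hco : (orderOf x).Coprime 2 := by
    rw [Nat.coprime_comm]
    exact (Nat.prime_two.coprime_iff_not_dvd).2 (by
      rw [← even_iff_two_dvd]
      exact (Nat.not_even_iff_odd.2 hx))
  have hco' : (orderOf x').Coprime 2 := by
    rw [Nat.coprime_comm]
    exact (Nat.prime_two.coprime_iff_not_dvd).2 (by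
      rw [← even_iff_two_dvd]
      exact (Nat.not_even_iff_odd.2 hx'))
  have hord : orderOf x = orderOf x' := by
    rw [← hco.orderOf_pow (y := x), ← hco'.orderOf_pow (y := x'), hsq]
  obtain ⟨k, hk⟩ := hx
  have htm : ∀ s : G, s ^ 2 = 1 → s ^ orderOf x = s := by
    intro s hs
    rw [hk, pow_add, pow_mul, hs, one_pow, one_mul, pow_one]
  have h1 : (t * x) ^ orderOf x = t := by
    rw [c.mul_pow, htm t ht, pow_orderOf_eq_one, mul_one]
  have h2 : (t' * x') ^ orderOf x = t' := by
    rw [c'.mul_pow, htm t' ht', hord, pow_orderOf_eq_one, mul_one]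
  have hts : t = t' := by rw [← h1, h, h2]
  refine ⟨hts, ?_⟩
  rw [hts] at h
  exact mul_left_cancel h

theorem stmt7 (G : Type*) [Group G] [Fintype G] (h : Even (Fintype.card G))
    (hle : {t : G | orderOf t = 2}.ncard ≤
      {x : G | Odd (orderOf x) ∧ ∀ t : G, orderOf t = 2 → t * x = x * t}.ncard) :
    hasPerfectMatching (powerGraph G) := by
  classical
  haveI : Fact (Nat.Prime 2) := ⟨Nat.prime_two⟩
  obtain ⟨t₀, ht₀⟩ := exists_prime_orderOf_dvd_card (G := G) 2 (even_iff_two_dvd.1 h)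
  set Sf : Finset G := Finset.univ.filter (fun t => orderOf t = 2) with hSfdef
  have hmemSf : ∀ a : G, a ∈ Sf ↔ orderOf a = 2 := by simp [hSfdef]
  have ht₀Sf : t₀ ∈ Sf := (hmemSf t₀).2 ht₀
  have ht₀ne1 : t₀ ≠ 1 := by
    intro hc; rw [hc, orderOf_one] at ht₀; omega
  have hsq : ∀ a : G, orderOf a = 2 → a ^ 2 = 1 := fun a ha => ha ▸ pow_orderOf_eq_one a
  have hinv_self : ∀ a : G, orderOf a = 2 → a⁻¹ = a := by
    intro a ha
    have h2 := hsq a ha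
    rw [pow_two] at h2
    exact inv_eq_of_mul_eq_one_left h2
  have hord2 : ∀ a : G, a * a = 1 → a = 1 ∨ orderOf a = 2 := by
    intro a ha
    have hd : orderOf a ∣ 2 := orderOf_dvd_iff_pow_eq_one.2 (by rwa [pow_two])
    rcases (Nat.Prime.eq_one_or_self_of_dvd Nat.prime_two _ hd) with h1 | h2
    · exact Or.inl (orderOf_eq_one_iff.1 h1)
    · exact Or.inr h2
  -- the number of involutions is odd
  have hodds : Odd Sf.card := by
    have hBeven : Even ((Finset.univ.filter (fun g : G => g⁻¹ ≠ g)).card) := by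
      refine even_card_invol (fun g => g⁻¹) _ ?_ ?_ ?_
      · intro a ha
        simp only [Finset.mem_filter, Finset.mem_univ, true_and] at ha ⊢
        rw [inv_inv]
        exact fun hc => ha hc.symm
      · intro a _; exact inv_inv a
      · intro a ha
        simpa using (Finset.mem_filter.1 ha).2
    have hsplit : (Finset.univ.filter (fun g : G => g⁻¹ = g)).card +
        (Finset.univ.filter (fun g : G => g⁻¹ ≠ g)).card = Fintype.card G := by
      rw [← Finset.card_univ]
      exact Finset.card_filter_add_card_filter_not _
    have hAins : (Finset.univ.filter (fun g : G => g⁻¹ = g)) = insert 1 Sf := by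
      ext g
      simp only [Finset.mem_filter, Finset.mem_univ, true_and, Finset.mem_insert, hmemSf]
      constructor
      · intro hg
        refine hord2 g ?_
        nth_rewrite 1 [← hg]; exact inv_mul_cancel g
      · rintro (rfl | hg)
        · simp
        · exact hinv_self g hg
    have h1nSf : (1 : G) ∉ Sf := by
      intro hc; have := (hmemSf 1).1 hc; rw [orderOf_one] at this; omega
    have hAcard : (Finset.univ.filter (fun g : G => g⁻¹ = g)).card = Sf.card + 1 := by
      rw [hAins, Finset.card_insert_of_notMem h1nSf]
    obtain ⟨k1, hk1⟩ := hBeven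
    obtain ⟨k2, hk2⟩ := h
    exact Nat.odd_iff.2 (by omega)
  obtain ⟨p, hp⟩ := hodds
  set S' := Sf.erase t₀ with hS'def
  have hS'card : S'.card = 2 * p := by
    have := Finset.card_erase_add_one ht₀Sf
    rw [← hS'def] at this
    omega
  let e : Fin p × Bool ≃ S' := Fintype.equivOfCardEq (by
    simp only [Fintype.card_prod, Fintype.card_fin, Fintype.card_bool, Fintype.card_coe,
      hS'card]
    ring)
  let τ : Fin p × Bool → G := fun j => (e j : G)
  have hτinj : Function.Injective τ := fun a b hab => e.injective (Subtype.ext hab)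
  have hτS' : ∀ j, τ j ∈ S' := fun j => (e j).2
  have hτord : ∀ j, orderOf (τ j) = 2 := fun j =>
    (hmemSf _).1 (Finset.mem_of_mem_erase (hτS' j))
  have hτt₀ : ∀ j, τ j ≠ t₀ := fun j => (Finset.mem_erase.1 (hτS' j)).1
  have hτ1 : ∀ j, τ j ≠ 1 := by
    intro j hc; have := hτord j; rw [hc, orderOf_one] at this; omega
  have hτsurj : ∀ a : G, orderOf a = 2 → a ≠ t₀ → ∃ j, τ j = a := by
    intro a ha hat
    refine ⟨e.symm ⟨a, Finset.mem_erase.2 ⟨hat, (hmemSf a).2 ha⟩⟩, ?_⟩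
    show ((e (e.symm _) : S') : G) = a
    rw [Equiv.apply_symm_apply]
  -- the odd-order elements of the centralizer of involutions
  set Of : Finset G := Finset.univ.filter
    (fun x : G => Odd (orderOf x) ∧ ∀ t : G, orderOf t = 2 → t * x = x * t) with hOfdef
  have hmemOf : ∀ x : G, x ∈ Of ↔
      (Odd (orderOf x) ∧ ∀ t : G, orderOf t = 2 → t * x = x * t) := by simp [hOfdef]
  have hle' : Sf.card ≤ Of.card := by
    have h1 : {t : G | orderOf t = 2}.ncard = Sf.card := by
      rw [Set.ncard_eq_toFinset_card']
      simp [hSfdef, Set.toFinset_setOf]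
    have h2 : {x : G | Odd (orderOf x) ∧ ∀ t : G, orderOf t = 2 → t * x = x * t}.ncard
        = Of.card := by
      rw [Set.ncard_eq_toFinset_card']
      simp [hOfdef, Set.toFinset_setOf]
    omega
  have h1Of : (1 : G) ∈ Of := (hmemOf 1).2 ⟨by rw [orderOf_one]; exact odd_one, by simp⟩
  set Of' := Of.erase 1 with hOf'def
  have hOf'card : 2 * p ≤ Of'.card := by
    have := Finset.card_erase_add_one h1Of
    rw [← hOf'def] at this
    omega
  have hOf'inv : ∀ x ∈ Of', x⁻¹ ∈ Of' := by
    intro x hx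
    obtain ⟨hx1, hxOf⟩ := Finset.mem_erase.1 hx
    obtain ⟨ho, hc⟩ := (hmemOf x).1 hxOf
    refine Finset.mem_erase.2 ⟨by simpa using hx1, (hmemOf _).2
      ⟨by simpa [orderOf_inv] using ho, ?_⟩⟩
    intro t htord
    have hcm : Commute t x := hc t htord
    exact hcm.inv_right
  have hOf'ne : ∀ x ∈ Of', x⁻¹ ≠ x := by
    intro x hx hc
    obtain ⟨hx1, hxOf⟩ := Finset.mem_erase.1 hx
    obtain ⟨ho, _⟩ := (hmemOf x).1 hxOf
    have hx2 : x * x = 1 := by nth_rewrite 1 [← hc]; exact inv_mul_cancel x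
    rcases hord2 x hx2 with h1 | h2
    · exact hx1 h1
    · rw [h2] at ho; exact (by decide : ¬ Odd 2) ho
  obtain ⟨X, hXmem, hXdist⟩ := select_inv p Of' hOf'inv hOf'ne hOf'card
  have hX1 : ∀ i, X i ≠ 1 := fun i => (Finset.mem_erase.1 (hXmem i)).1
  have hXodd : ∀ i, Odd (orderOf (X i)) := fun i =>
    ((hmemOf _).1 (Finset.mem_of_mem_erase (hXmem i))).1
  have hXcomm : ∀ i (t : G), orderOf t = 2 → Commute t (X i) := fun i t ht =>
    ((hmemOf _).1 (Finset.mem_of_mem_erase (hXmem i))).2 t ht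
  have hXii : ∀ i, X i ≠ (X i)⁻¹ := fun i hc => hOf'ne _ (hXmem i) hc.symm
  -- the four families of paired elements
  let u : Fin p × Bool → G := fun j => τ j * X j.1
  let w : Fin p × Bool → G := fun j => τ j * (X j.1)⁻¹
  let o : Fin p × Bool → G := fun j => if j.2 then X j.1 else (X j.1)⁻¹
  have hov2 : ∀ i, o (i, true) = X i := fun i => rfl
  have hov3 : ∀ i, o (i, false) = (X i)⁻¹ := fun i => rfl
  have hoform : ∀ j, o j = X j.1 ∨ o j = (X j.1)⁻¹ := by
    rintro ⟨i, b⟩; cases b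
    · exact Or.inr (hov3 i)
    · exact Or.inl (hov2 i)
  -- atoms for the master cancellation lemma
  have aT : ∀ j, τ j = 1 ∨ orderOf (τ j) = 2 := fun j => Or.inr (hτord j)
  have aT0 : (t₀ = 1 ∨ orderOf t₀ = 2) := Or.inr ht₀
  have a1 : ((1:G) = 1 ∨ orderOf (1:G) = 2) := Or.inl rfl
  have y1 : ((1:G) = 1 ∨ ∃ i, (1:G) = X i ∨ (1:G) = (X i)⁻¹) := Or.inl rfl
  have yX : ∀ i, (X i = 1 ∨ ∃ i', X i = X i' ∨ X i = (X i')⁻¹) :=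
    fun i => Or.inr ⟨i, Or.inl rfl⟩
  have yXi : ∀ i, ((X i)⁻¹ = 1 ∨ ∃ i', (X i)⁻¹ = X i' ∨ (X i)⁻¹ = (X i')⁻¹) :=
    fun i => Or.inr ⟨i, Or.inr rfl⟩
  have yo : ∀ j, (o j = 1 ∨ ∃ i', o j = X i' ∨ o j = (X i')⁻¹) :=
    fun j => Or.inr ⟨j.1, hoform j⟩
  have key : ∀ (s x s' x' : G), (s = 1 ∨ orderOf s = 2) → (s' = 1 ∨ orderOf s' = 2) →
      (x = 1 ∨ ∃ i, x = X i ∨ x = (X i)⁻¹) → (x' = 1 ∨ ∃ i, x' = X i ∨ x' = (X i)⁻¹) →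
      s * x = s' * x' → s = s' ∧ x = x' := by
    have hT2 : ∀ s : G, (s = 1 ∨ orderOf s = 2) → s ^ 2 = 1 := by
      rintro s (rfl | hs)
      · simp
      · exact hsq s hs
    have hoddY : ∀ x : G, (x = 1 ∨ ∃ i, x = X i ∨ x = (X i)⁻¹) → Odd (orderOf x) := by
      rintro x (rfl | ⟨i, rfl | rfl⟩)
      · rw [orderOf_one]; exact odd_one
      · exact hXodd i
      · simpa [orderOf_inv] using hXodd i
    have hcommT : ∀ (s x : G), (s = 1 ∨ orderOf s = 2) →
        (x = 1 ∨ ∃ i, x = X i ∨ x = (X i)⁻¹) → Commute s x := by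
      rintro s x hs (rfl | ⟨i, rfl | rfl⟩)
      · exact Commute.one_right s
      · rcases hs with rfl | hs
        · exact Commute.one_left _
        · exact hXcomm i s hs
      · rcases hs with rfl | hs
        · exact Commute.one_left _
        · exact (hXcomm i s hs).inv_right
    intro s x s' x' hs hs' hx hx' heq
    exact decomp_unique (hT2 s hs) (hT2 s' hs') (hoddY x hx) (hoddY x' hx')
      (hcommT s x hs hx) (hcommT s' x' hs' hx') heq
  -- distinctness facts
  have hXne : ∀ i i', X i = X i' → i = i' := by
    intro i i' hc
    by_contra hii
    exact (hXdist i i' hii).1 hc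
  have hXnei : ∀ i i', X i = (X i')⁻¹ → False := by
    intro i i' hc
    by_cases hii : i = i'
    · subst hii; exact hXii i hc
    · exact (hXdist i i' hii).2 hc
  have huinj : ∀ j k, u j = u k → j = k := by
    intro j k hc
    have hk := key (τ j) (X j.1) (τ k) (X k.1) (aT j) (aT k) (yX j.1) (yX k.1) hc
    exact hτinj hk.1
  have hwinj : ∀ j k, w j = w k → j = k := by
    intro j k hc
    have hk := key (τ j) (X j.1)⁻¹ (τ k) (X k.1)⁻¹ (aT j) (aT k) (yXi j.1) (yXi k.1) hc
    exact hτinj hk.1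
  have hoinj : ∀ j k, o j = o k → j = k := by
    rintro ⟨i, b⟩ ⟨i', b'⟩ hc
    cases b <;> cases b'
    · rw [hov3, hov3] at hc
      rw [hXne i i' (inv_injective hc)]
    · rw [hov3, hov2] at hc
      exact absurd hc.symm (fun hcc => hXnei i' i hcc)
    · rw [hov2, hov3] at hc
      exact absurd hc (fun hcc => hXnei i i' hcc)
    · rw [hov2, hov2] at hc
      rw [hXne i i' hc]
  have hune1 : ∀ j, u j ≠ 1 := by
    intro j hc
    have hk := key (τ j) (X j.1) 1 1 (aT j) a1 (yX j.1) y1 (by rw [mul_one]; exact hc)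
    exact hτ1 j hk.1
  have hunet : ∀ j, u j ≠ t₀ := by
    intro j hc
    have hk := key (τ j) (X j.1) t₀ 1 (aT j) aT0 (yX j.1) y1 (by rw [mul_one]; exact hc)
    exact hX1 j.1 hk.2
  have huneτ : ∀ j, ¬ ∃ k, τ k = u j := by
    rintro j ⟨k, hc⟩
    have hk := key (τ k) 1 (τ j) (X j.1) (aT k) (aT j) y1 (yX j.1)
      (by rw [mul_one]; exact hc)
    exact hX1 j.1 hk.2.symm
  have hwne1 : ∀ j, w j ≠ 1 := by
    intro j hc
    have hk := key (τ j) (X j.1)⁻¹ 1 1 (aT j) a1 (yXi j.1) y1 (by rw [mul_one]; exact hc)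
    exact hτ1 j hk.1
  have hwnet : ∀ j, w j ≠ t₀ := by
    intro j hc
    have hk := key (τ j) (X j.1)⁻¹ t₀ 1 (aT j) aT0 (yXi j.1) y1 (by rw [mul_one]; exact hc)
    exact hX1 j.1 (by rw [← inv_inv (X j.1), hk.2, inv_one])
  have hwneτ : ∀ j, ¬ ∃ k, τ k = w j := by
    rintro j ⟨k, hc⟩
    have hk := key (τ k) 1 (τ j) (X j.1)⁻¹ (aT k) (aT j) y1 (yXi j.1)
      (by rw [mul_one]; exact hc)
    exact hX1 j.1 (by rw [← inv_inv (X j.1), ← hk.2, inv_one])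
  have hwneu : ∀ j, ¬ ∃ k, u k = w j := by
    rintro j ⟨k, hc⟩
    have hk := key (τ k) (X k.1) (τ j) (X j.1)⁻¹ (aT k) (aT j) (yX k.1) (yXi j.1) hc
    exact hXnei k.1 j.1 hk.2
  have hone1 : ∀ j, o j ≠ 1 := by
    intro j hc
    rcases hoform j with hf | hf
    · exact hX1 j.1 (by rw [← hf, hc])
    · exact hX1 j.1 (by rw [← inv_inv (X j.1), ← hf, hc, inv_one])
  have honet : ∀ j, o j ≠ t₀ := by
    intro j hc
    have hk := key 1 (o j) t₀ 1 a1 aT0 (yo j) y1 (by rw [one_mul, mul_one]; exact hc)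
    exact ht₀ne1 hk.1.symm
  have honeτ : ∀ j, ¬ ∃ k, τ k = o j := by
    rintro j ⟨k, hc⟩
    have hk := key (τ k) 1 1 (o j) (aT k) a1 y1 (yo j)
      (by rw [mul_one, one_mul]; exact hc)
    exact hτ1 k hk.1
  have honeu : ∀ j, ¬ ∃ k, u k = o j := by
    rintro j ⟨k, hc⟩
    have hk := key (τ k) (X k.1) 1 (o j) (aT k) a1 (yX k.1) (yo j)
      (by rw [one_mul]; exact hc)
    exact hτ1 k hk.1
  have honew : ∀ j, ¬ ∃ k, w k = o j := by
    rintro j ⟨k, hc⟩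
    have hk := key (τ k) (X k.1)⁻¹ 1 (o j) (aT k) a1 (yXi k.1) (yo j)
      (by rw [one_mul]; exact hc)
    exact hτ1 k hk.1
  -- the pairing function
  let f : G → G := fun a =>
    if a = 1 then t₀
    else if a = t₀ then 1
    else if hh : ∃ j, τ j = a then u hh.choose
    else if hh : ∃ j, u j = a then τ hh.choose
    else if hh : ∃ j, w j = a then o hh.choose
    else if hh : ∃ j, o j = a then w hh.choose
    else a⁻¹
  have hf1 : f 1 = t₀ := by
    show (if (1:G) = 1 then t₀ else _) = t₀
    rw [if_pos rfl]
  have hft₀ : f t₀ = 1 := by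
    show (if t₀ = 1 then t₀ else if t₀ = t₀ then 1 else _) = 1
    rw [if_neg ht₀ne1, if_pos rfl]
  have hfτ : ∀ j, f (τ j) = u j := by
    intro j
    have hex : ∃ k, τ k = τ j := ⟨j, rfl⟩
    show (if _ = 1 then _ else if _ = t₀ then _ else if hh : ∃ k, τ k = τ j then u hh.choose
      else _) = u j
    rw [if_neg (hτ1 j), if_neg (hτt₀ j), dif_pos hex]
    exact congrArg u (hτinj hex.choose_spec)
  have hfu : ∀ j, f (u j) = τ j := by
    intro j
    have hex : ∃ k, u k = u j := ⟨j, rfl⟩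
    show (if _ = 1 then _ else if _ = t₀ then _ else if _ : ∃ k, τ k = u j then _
      else if hh : ∃ k, u k = u j then τ hh.choose else _) = τ j
    rw [if_neg (hune1 j), if_neg (hunet j), dif_neg (huneτ j), dif_pos hex]
    exact congrArg τ (huinj _ _ hex.choose_spec)
  have hfw : ∀ j, f (w j) = o j := by
    intro j
    have hex : ∃ k, w k = w j := ⟨j, rfl⟩
    show (if _ = 1 then _ else if _ = t₀ then _ else if _ : ∃ k, τ k = w j then _
      else if _ : ∃ k, u k = w j then _
      else if hh : ∃ k, w k = w j then o hh.choose else _) = o j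
    rw [if_neg (hwne1 j), if_neg (hwnet j), dif_neg (hwneτ j), dif_neg (hwneu j),
      dif_pos hex]
    exact congrArg o (hwinj _ _ hex.choose_spec)
  have hfo : ∀ j, f (o j) = w j := by
    intro j
    have hex : ∃ k, o k = o j := ⟨j, rfl⟩
    show (if _ = 1 then _ else if _ = t₀ then _ else if _ : ∃ k, τ k = o j then _
      else if _ : ∃ k, u k = o j then _
      else if _ : ∃ k, w k = o j then _
      else if hh : ∃ k, o k = o j then w hh.choose else _) = w j
    rw [if_neg (hone1 j), if_neg (honet j), dif_neg (honeτ j), dif_neg (honeu j),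
      dif_neg (honew j), dif_pos hex]
    exact congrArg w (hoinj _ _ hex.choose_spec)
  -- specials
  have hfgen : ∀ a : G, ¬ (a = 1 ∨ a = t₀ ∨ (∃ j, τ j = a) ∨ (∃ j, u j = a) ∨
      (∃ j, w j = a) ∨ (∃ j, o j = a)) → f a = a⁻¹ := by
    intro a hs
    push_neg at hs
    obtain ⟨h1, h2, h3, h4, h5, h6⟩ := hs
    show (if a = 1 then _ else if a = t₀ then _ else if _ : ∃ k, τ k = a then _
      else if _ : ∃ k, u k = a then _
      else if _ : ∃ k, w k = a then _
      else if _ : ∃ k, o k = a then _ else a⁻¹) = a⁻¹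
    rw [if_neg h1, if_neg h2, dif_neg (by push_neg; exact h3),
      dif_neg (by push_neg; exact h4), dif_neg (by push_neg; exact h5),
      dif_neg (by push_neg; exact h6)]
  have hSpecInv : ∀ a : G, (a = 1 ∨ a = t₀ ∨ (∃ j, τ j = a) ∨ (∃ j, u j = a) ∨
      (∃ j, w j = a) ∨ (∃ j, o j = a)) → (a⁻¹ = 1 ∨ a⁻¹ = t₀ ∨ (∃ j, τ j = a⁻¹) ∨
      (∃ j, u j = a⁻¹) ∨ (∃ j, w j = a⁻¹) ∨ (∃ j, o j = a⁻¹)) := by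
    rintro a (rfl | rfl | ⟨j, rfl⟩ | ⟨j, rfl⟩ | ⟨j, rfl⟩ | ⟨j, rfl⟩)
    · exact Or.inl (by simp)
    · exact Or.inr (Or.inl (hinv_self _ ht₀))
    · exact Or.inr (Or.inr (Or.inl ⟨j, (hinv_self _ (hτord j)).symm⟩))
    · refine Or.inr (Or.inr (Or.inr (Or.inr (Or.inl ⟨j, ?_⟩))))
      show τ j * (X j.1)⁻¹ = (τ j * X j.1)⁻¹
      rw [mul_inv_rev, hinv_self _ (hτord j)]
      exact ((hXcomm j.1 _ (hτord j)).inv_right).eq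
    · refine Or.inr (Or.inr (Or.inr (Or.inl ⟨j, ?_⟩)))
      show τ j * X j.1 = (τ j * (X j.1)⁻¹)⁻¹
      rw [mul_inv_rev, inv_inv, hinv_self _ (hτord j)]
      exact (hXcomm j.1 _ (hτord j)).eq
    · refine Or.inr (Or.inr (Or.inr (Or.inr (Or.inr ⟨(j.1, !j.2), ?_⟩))))
      obtain ⟨i, b⟩ := j
      cases b
      · rw [hov3]; exact (hov2 i).trans (inv_inv _).symm
      · rw [hov2]; exact hov3 i
  have hinvol : Function.Involutive f := by
    intro a
    by_cases hs : (a = 1 ∨ a = t₀ ∨ (∃ j, τ j = a) ∨ (∃ j, u j = a) ∨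
      (∃ j, w j = a) ∨ (∃ j, o j = a))
    · rcases hs with rfl | rfl | ⟨j, rfl⟩ | ⟨j, rfl⟩ | ⟨j, rfl⟩ | ⟨j, rfl⟩
      · rw [hf1, hft₀]
      · rw [hft₀, hf1]
      · rw [hfτ, hfu]
      · rw [hfu, hfτ]
      · rw [hfw, hfo]
      · rw [hfo, hfw]
    · have hs' : ¬ (a⁻¹ = 1 ∨ a⁻¹ = t₀ ∨ (∃ j, τ j = a⁻¹) ∨ (∃ j, u j = a⁻¹) ∨
          (∃ j, w j = a⁻¹) ∨ (∃ j, o j = a⁻¹)) := by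
        intro hc
        exact hs (by simpa using hSpecInv _ hc)
      rw [hfgen a hs, hfgen _ hs', inv_inv]
  -- adjacency
  have hadj1t₀ : (powerGraph G).Adj 1 t₀ := ⟨Ne.symm ht₀ne1, Or.inl ⟨2, hsq t₀ ht₀⟩⟩
  have hadjτu : ∀ j, (powerGraph G).Adj (τ j) (u j) := by
    intro j
    have c : Commute (τ j) (X j.1) := hXcomm j.1 _ (hτord j)
    obtain ⟨k, hk⟩ := hXodd j.1
    have hpow : (u j) ^ (orderOf (X j.1)) = τ j := by
      show (τ j * X j.1) ^ (orderOf (X j.1)) = τ j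
      rw [c.mul_pow, pow_orderOf_eq_one, mul_one, hk, pow_add, pow_mul,
        hsq _ (hτord j), one_pow, pow_one, one_mul]
    refine ⟨?_, Or.inl ⟨_, hpow⟩⟩
    intro hc
    have hk2 := key (τ j) 1 (τ j) (X j.1) (aT j) (aT j) y1 (yX j.1)
      (by rw [mul_one]; exact hc)
    exact hX1 j.1 hk2.2.symm
  have hadjwo : ∀ j, (powerGraph G).Adj (w j) (o j) := by
    intro j
    have c : Commute (τ j) (X j.1)⁻¹ := (hXcomm j.1 _ (hτord j)).inv_right
    obtain ⟨k, hk⟩ := hXodd j.1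
    have hXm : (X j.1) ^ (orderOf (X j.1)) = 1 := pow_orderOf_eq_one _
    have hne : w j ≠ o j := by
      intro hc
      have hk2 := key (τ j) (X j.1)⁻¹ 1 (o j) (aT j) a1 (yXi j.1) (yo j)
        (by rw [one_mul]; exact hc)
      exact hτ1 j hk2.1
    refine ⟨hne, Or.inr ?_⟩
    obtain ⟨i, b⟩ := j
    cases b
    · refine ⟨2 * k + 2, ?_⟩
      rw [hov3]
      show (τ (i, false) * (X i)⁻¹) ^ (2 * k + 2) = (X i)⁻¹
      rw [c.mul_pow]
      have h1 : (τ (i, false)) ^ (2 * k + 2) = 1 := by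
        rw [show 2 * k + 2 = 2 * (k + 1) by ring, pow_mul, hsq _ (hτord (i, false)),
          one_pow]
      have h2 : ((X i)⁻¹) ^ (2 * k + 2) = (X i)⁻¹ := by
        rw [inv_pow, show 2 * k + 2 = (2 * k + 1) + 1 by ring, pow_succ, ← hk, hXm,
          one_mul]
      rw [h1, h2, one_mul]
    · refine ⟨2 * k, ?_⟩
      rw [hov2]
      show (τ (i, true) * (X i)⁻¹) ^ (2 * k) = X i
      rw [c.mul_pow]
      have h1 : (τ (i, true)) ^ (2 * k) = 1 := by
        rw [pow_mul, hsq _ (hτord (i, true)), one_pow]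
      have h2 : ((X i)⁻¹) ^ (2 * k) = X i := by
        have h3 : (X i) ^ (2 * k) * (X i) = 1 := by
          rw [← pow_succ, ← hk, hXm]
        rw [inv_pow, eq_inv_of_mul_eq_one_left h3, inv_inv]
      rw [h1, h2, one_mul]
  have hadjgen : ∀ a : G, ¬ (a = 1 ∨ a = t₀ ∨ (∃ j, τ j = a) ∨ (∃ j, u j = a) ∨
      (∃ j, w j = a) ∨ (∃ j, o j = a)) → (powerGraph G).Adj a a⁻¹ := by
    intro a hs
    have hane : a ≠ a⁻¹ := by
      intro hc
      have haa : a * a = 1 := by nth_rewrite 2 [hc]; exact mul_inv_cancel a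
      rcases hord2 a haa with h1 | h2
      · exact hs (Or.inl h1)
      · by_cases hat : a = t₀
        · exact hs (Or.inr (Or.inl hat))
        · exact hs (Or.inr (Or.inr (Or.inl (hτsurj a h2 hat))))
    have hpos : 0 < orderOf a := orderOf_pos a
    have hpow : a ^ (orderOf a - 1) * a = 1 := by
      rw [← pow_succ, Nat.sub_add_cancel hpos, pow_orderOf_eq_one]
    exact ⟨hane, Or.inr ⟨orderOf a - 1, eq_inv_of_mul_eq_one_left hpow⟩⟩
  have hadj : ∀ a : G, (powerGraph G).Adj a (f a) := by
    intro a
    by_cases hs : (a = 1 ∨ a = t₀ ∨ (∃ j, τ j = a) ∨ (∃ j, u j = a) ∨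
      (∃ j, w j = a) ∨ (∃ j, o j = a))
    · rcases hs with rfl | rfl | ⟨j, rfl⟩ | ⟨j, rfl⟩ | ⟨j, rfl⟩ | ⟨j, rfl⟩
      · rw [hf1]; exact hadj1t₀
      · rw [hft₀]; exact hadj1t₀.symm
      · rw [hfτ]; exact hadjτu j
      · rw [hfu]; exact (hadjτu j).symm
      · rw [hfw]; exact hadjwo j
      · rw [hfo]; exact (hadjwo j).symm
    · rw [hfgen a hs]; exact hadjgen a hs
  exact pm_of_involutive _ f hinvol hadj
end

section
/- Let G be a finite group of even order, S the set of involutions, and m = |O(C_G(S))| the number of elements of odd order commuting with all involutions. Then the power graph of G has a matching leaving at most max{0, |S| - m} vertices unmatched. -/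
open SimpleGraph

-- generic matching from involution
lemma matching_of_involution {V : Type*} (Γ : SimpleGraph V) (A : Set V) (σ : V → V)
    (hmem : ∀ v ∈ A, σ v ∈ A) (hinv : ∀ v ∈ A, σ (σ v) = v)
    (hadj : ∀ v ∈ A, Γ.Adj v (σ v)) :
    ∃ M : Γ.Subgraph, M.IsMatching ∧ M.verts = A := by
  refine ⟨{ verts := A,
            Adj := fun v w => (v ∈ A ∧ w = σ v) ∨ (w ∈ A ∧ v = σ w),
            adj_sub := ?_, edge_vert := ?_, symm := ?_ }, ?_, rfl⟩
  · rintro v w (⟨hv, rfl⟩ | ⟨hw, rfl⟩)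
    · exact hadj v hv
    · exact (hadj w hw).symm
  · rintro v w (⟨hv, rfl⟩ | ⟨hw, rfl⟩)
    · exact hv
    · exact hmem w hw
  · refine ⟨?_⟩
    rintro v w (⟨hv, rfl⟩ | ⟨hw, rfl⟩)
    · exact Or.inr ⟨hv, rfl⟩
    · exact Or.inl ⟨hw, rfl⟩
  · intro v hv
    refine ⟨σ v, Or.inl ⟨hv, rfl⟩, ?_⟩
    rintro w (⟨_, rfl⟩ | ⟨hw, rfl⟩)
    · rfl
    · exact (hinv w hw).symm

-- representative extraction
lemma exists_reps {α : Type*} [DecidableEq α] (f : α → α) (hf : ∀ a, f (f a) = a) :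
    ∀ (s : Finset α), (∀ a ∈ s, f a ∈ s) → (∀ a ∈ s, f a ≠ a) →
    ∃ r ⊆ s, (∀ a ∈ r, f a ∉ r) ∧ s.card = 2 * r.card := by
  intro s
  induction s using Finset.strongInduction with
  | _ s ih =>
    intro hcl hfp
    rcases s.eq_empty_or_nonempty with rfl | ⟨a, ha⟩
    · exact ⟨∅, by simp⟩
    · have hfa : f a ∈ s := hcl a ha
      have hfa' : f a ≠ a := hfp a ha
      have hss : s \ {a, f a} ⊂ s := by
        refine Finset.sdiff_ssubset ?_ (by simp [ha])
        intro x hx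
        simp only [Finset.mem_insert, Finset.mem_singleton] at hx
        rcases hx with rfl | rfl <;> simp [ha, hfa]
      obtain ⟨r, hr, hrf, hcard⟩ := ih _ hss
        (by
          intro b hb
          simp only [Finset.mem_sdiff, Finset.mem_insert, Finset.mem_singleton, not_or] at hb ⊢
          obtain ⟨hbs, hba, hbfa⟩ := hb
          refine ⟨hcl b hbs, ?_, ?_⟩
          · intro hh; exact hbfa (by rw [← hh, hf])
          · intro hh; exact hba (by rw [← hf b, hh, hf]))
        (fun b hb => hfp b (Finset.mem_sdiff.mp hb).1)
      have har : a ∉ r := fun hh => by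
        have := hr hh; simp at this
      refine ⟨insert a r, ?_, ?_, ?_⟩
      · intro b hb
        rcases Finset.mem_insert.mp hb with rfl | hb
        · exact ha
        · exact (Finset.mem_sdiff.mp (hr hb)).1
      · intro b hb
        rcases Finset.mem_insert.mp hb with rfl | hb
        · intro hc
          rcases Finset.mem_insert.mp hc with hc | hc
          · exact hfa' hc
          · have := hr hc; simp at this
        · intro hc
          rcases Finset.mem_insert.mp hc with hc | hc
          · have := Finset.mem_sdiff.mp (hr hb)
            simp only [Finset.mem_insert, Finset.mem_singleton, not_or] at this
            exact this.2.2 (by rw [← hc, hf])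
          · exact hrf b hb hc
      · have hcard2 : (s \ {a, f a}).card = s.card - 2 := by
          rw [Finset.card_sdiff_of_subset (by
            intro x hx
            simp only [Finset.mem_insert, Finset.mem_singleton] at hx
            rcases hx with rfl | rfl <;> assumption)]
          congr 1
          rw [Finset.card_insert_of_notMem (by simp [Ne.symm hfa']), Finset.card_singleton]
        have h2 : 2 ≤ s.card := by
          have : ({a, f a} : Finset α) ⊆ s := by
            intro x hx
            simp only [Finset.mem_insert, Finset.mem_singleton] at hx
            rcases hx with rfl | rfl <;> assumption
          calc 2 = ({a, f a} : Finset α).card := by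
                rw [Finset.card_insert_of_notMem (by simp [Ne.symm hfa']), Finset.card_singleton]
            _ ≤ s.card := Finset.card_le_card this
        rw [Finset.card_insert_of_notMem har]
        omega

-- squaring injective on odd order elements
lemma sq_inj_odd {G : Type*} [Group G] [Fintype G] {z w : G}
    (hz : Odd (orderOf z)) (hw : Odd (orderOf w)) (h : z ^ 2 = w ^ 2) : z = w := by
  have hzp : z = (z ^ 2) ^ ((orderOf z + 1) / 2) := by
    rw [← pow_mul]
    obtain ⟨k, hk⟩ := hz
    have : 2 * ((orderOf z + 1) / 2) = orderOf z + 1 := by omega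
    rw [this, pow_succ, pow_orderOf_eq_one, one_mul]
  have hcomm : Commute z w := by
    rw [hzp, h]
    exact ((Commute.refl w).pow_left 2).pow_left _
  have hd : orderOf (z * w⁻¹) ∣ orderOf z * orderOf w := by
    have h1 := (hcomm.inv_right).orderOf_mul_dvd_lcm
    rw [orderOf_inv] at h1
    exact h1.trans (Nat.lcm_dvd_mul _ _)
  have hodd : Odd (orderOf z * orderOf w) := hz.mul hw
  have hsq : (z * w⁻¹) ^ 2 = 1 := by
    rw [hcomm.inv_right.mul_pow, h]
    group
  have h2 : orderOf (z * w⁻¹) ∣ 2 := orderOf_dvd_of_pow_eq_one hsq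
  have h1 : orderOf (z * w⁻¹) = 1 := by
    rcases (Nat.dvd_prime Nat.prime_two).mp h2 with h1 | h1
    · exact h1
    · exfalso
      rw [h1] at hd
      rcases hodd with ⟨c, hc⟩
      rcases hd with ⟨e, he⟩
      omega
  have := orderOf_eq_one_iff.mp h1
  exact mul_inv_eq_one.mp this

lemma odd_pow_invol {G : Type*} [Group G] {t : G} (ht : t ^ 2 = 1) {n : ℕ} (hn : Odd n) :
    t ^ n = t := by
  obtain ⟨m, rfl⟩ := hn
  rw [pow_add, pow_mul, ht, one_pow, one_mul, pow_one]

lemma even_pow_invol {G : Type*} [Group G] {t : G} (ht : t ^ 2 = 1) {n : ℕ} (hn : Even n) :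
    t ^ n = 1 := by
  obtain ⟨m, rfl⟩ := hn
  rw [← two_mul, pow_mul, ht, one_pow]

lemma prod_invol_odd_inj {G : Type*} [Group G] [Fintype G] {t t' z z' : G}
    (ht : t ^ 2 = 1) (ht' : t' ^ 2 = 1)
    (hz : Odd (orderOf z)) (hz' : Odd (orderOf z'))
    (hc : Commute t z) (hc' : Commute t' z') (h : t * z = t' * z') :
    t = t' ∧ z = z' := by
  have hzz : z ^ 2 = z' ^ 2 := by
    have e1 : (t * z) ^ 2 = z ^ 2 := by rw [hc.mul_pow, ht, one_mul]
    have e2 : (t' * z') ^ 2 = z' ^ 2 := by rw [hc'.mul_pow, ht', one_mul]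
    rw [← e1, ← e2, h]
  have hz2 : z = z' := sq_inj_odd hz hz' hzz
  subst hz2
  exact ⟨mul_right_cancel h, rfl⟩

lemma invol_mul_pow_orderOf {G : Type*} [Group G] {t z : G} (ht : t ^ 2 = 1)
    (hz : Odd (orderOf z)) (hc : Commute t z) : (t * z) ^ (orderOf z) = t := by
  rw [hc.mul_pow, pow_orderOf_eq_one, mul_one, odd_pow_invol ht hz]

lemma invol_mul_inv_pow {G : Type*} [Group G] {t z : G} (ht : t ^ 2 = 1)
    (hz : Odd (orderOf z)) (hc : Commute t z) : (t * z⁻¹) ^ (orderOf z - 1) = z := by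
  have hc' : Commute t z⁻¹ := hc.inv_right
  have hk : 1 ≤ orderOf z := by rcases hz with ⟨m, hm⟩; omega
  have heven : Even (orderOf z - 1) := by rcases hz with ⟨m, hm⟩; exact ⟨m, by omega⟩
  rw [hc'.mul_pow, even_pow_invol ht heven, one_mul, inv_pow, inv_eq_iff_mul_eq_one,
    ← pow_succ]
  rw [Nat.sub_add_cancel hk, pow_orderOf_eq_one]

lemma orderOf_invol_mul {G : Type*} [Group G] {t z : G} (ht : orderOf t = 2)
    (hz : Odd (orderOf z)) (hc : Commute t z) : orderOf (t * z) = 2 * orderOf z := by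
  rw [hc.orderOf_mul_eq_mul_orderOf_of_coprime, ht]
  rw [ht]
  refine Nat.Prime.coprime_iff_not_dvd Nat.prime_two |>.mpr ?_
  rcases hz with ⟨m, hm⟩
  omega

theorem stmt8 (G : Type*) [Group G] [Fintype G] (h : Even (Fintype.card G)) :
    ∃ M : (powerGraph G).Subgraph, M.IsMatching ∧
      M.vertsᶜ.ncard ≤ max 0 ({t : G | orderOf t = 2}.ncard -
        {x : G | Odd (orderOf x) ∧ ∀ t : G, orderOf t = 2 → t * x = x * t}.ncard) := by
  classical
  haveI : Fact (Nat.Prime 2) := ⟨Nat.prime_two⟩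
  obtain ⟨t₀, ht₀⟩ : ∃ t : G, orderOf t = 2 :=
    exists_prime_orderOf_dvd_card 2 h.two_dvd
  have ht₀1 : t₀ ≠ 1 := by
    intro e; rw [e, orderOf_one] at ht₀; omega
  set S : Finset G := Finset.univ.filter (fun t => orderOf t = 2) with hS
  set C : Finset G := Finset.univ.filter
      (fun x => Odd (orderOf x) ∧ ∀ t : G, orderOf t = 2 → t * x = x * t) with hC
  have ht₀S : t₀ ∈ S := by simp [hS, ht₀]
  set S' : Finset G := S.erase t₀ with hS'
  have sq1 : ∀ u : G, orderOf u = 2 → u ^ 2 = 1 := fun u hu => hu ▸ pow_orderOf_eq_one u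
  have inv_self : ∀ u : G, orderOf u = 2 → u⁻¹ = u := by
    intro u hu
    have h2 := sq1 u hu
    rw [pow_two] at h2
    exact inv_eq_of_mul_eq_one_left h2
  -- order-2-free part has even cardinality
  have hdvd2 : ∀ g : G, g⁻¹ = g → orderOf g = 1 ∨ orderOf g = 2 := by
    intro g hg
    have h2 : g ^ 2 = 1 := by rw [pow_two]; nth_rewrite 2 [← hg]; exact mul_inv_cancel g
    exact (Nat.dvd_prime Nat.prime_two).mp (orderOf_dvd_of_pow_eq_one h2)
  have hNeven : Even ((Finset.univ.filter (fun g : G => orderOf g ≠ 1 ∧ orderOf g ≠ 2)).card) := by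
    obtain ⟨r, -, -, hcard⟩ := exists_reps (fun g : G => g⁻¹) (fun g => inv_inv g)
      (Finset.univ.filter (fun g : G => orderOf g ≠ 1 ∧ orderOf g ≠ 2))
      (by intro a ha; simp only [Finset.mem_filter, Finset.mem_univ, true_and,
            orderOf_inv] at ha ⊢; exact ha)
      (by intro a ha hfa
          simp only [Finset.mem_filter, Finset.mem_univ, true_and] at ha
          rcases hdvd2 a hfa with h' | h' <;> omega)
    exact ⟨r.card, by omega⟩
  have hSodd : Odd S.card := by
    have h1 : S.card + (Finset.univ.filter (fun g : G => ¬ orderOf g = 2)).card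
        = Fintype.card G := by
      rw [hS, Finset.card_filter_add_card_filter_not, Finset.card_univ]
    have h2 : ((Finset.univ.filter (fun g : G => ¬ orderOf g = 2)).filter
          (fun g => orderOf g = 1)).card
        + ((Finset.univ.filter (fun g : G => ¬ orderOf g = 2)).filter
          (fun g => ¬ orderOf g = 1)).card
        = (Finset.univ.filter (fun g : G => ¬ orderOf g = 2)).card :=
      Finset.card_filter_add_card_filter_not _
    have h3 : (Finset.univ.filter (fun g : G => ¬ orderOf g = 2)).filter
        (fun g => orderOf g = 1) = {(1 : G)} := by
      ext g
      simp only [Finset.mem_filter, Finset.mem_univ, true_and, Finset.mem_singleton,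
        orderOf_eq_one_iff]
      constructor
      · rintro ⟨-, h'⟩; exact h'
      · rintro rfl; exact ⟨by rw [orderOf_one]; omega, rfl⟩
    have h4 : (Finset.univ.filter (fun g : G => ¬ orderOf g = 2)).filter
        (fun g => ¬ orderOf g = 1)
        = Finset.univ.filter (fun g : G => orderOf g ≠ 1 ∧ orderOf g ≠ 2) := by
      rw [Finset.filter_filter]
      ext g
      simp only [Finset.mem_filter, Finset.mem_univ, true_and]
      tauto
    rw [h3, h4, Finset.card_singleton] at h2
    rcases hNeven with ⟨m, hm⟩
    rcases h with ⟨n, hn⟩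
    exact ⟨n - m - 1, by omega⟩
  have hS'card : S'.card = 2 * (S'.card / 2) := by
    have he : S'.card = S.card - 1 := Finset.card_erase_of_mem ht₀S
    rcases hSodd with ⟨m, hm⟩
    omega
  set p := S'.card / 2 with hp
  -- the set C
  have h1C : (1 : G) ∈ C := by
    rw [hC, Finset.mem_filter]
    exact ⟨Finset.mem_univ _, by rw [orderOf_one]; exact odd_one,
      fun t _ => by rw [mul_one, one_mul]⟩
  set C' : Finset G := C.erase 1 with hC'
  obtain ⟨R, hRC, hRinv, hRcard⟩ := exists_reps (fun g : G => g⁻¹) (fun g => inv_inv g) C'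
    (by intro a ha
        rw [hC', Finset.mem_erase] at ha ⊢
        obtain ⟨ha1, haC⟩ := ha
        rw [hC, Finset.mem_filter] at haC ⊢
        refine ⟨inv_ne_one.mpr ha1, Finset.mem_univ _, by rw [orderOf_inv]; exact haC.2.1, ?_⟩
        intro t ht
        have := haC.2.2 t ht
        have hcomm : Commute t a := this
        exact hcomm.inv_right.eq)
    (by intro a ha hfa
        rw [hC', Finset.mem_erase, hC, Finset.mem_filter] at ha
        rcases hdvd2 a hfa with h' | h'
        · exact ha.1 (orderOf_eq_one_iff.mp h')
        · rcases ha.2.2.1 with ⟨m, hm⟩; omega)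
  set q := min p R.card with hq
  have hqp : q ≤ p := min_le_left _ _
  have hqR : q ≤ R.card := min_le_right _ _
  -- families
  set xa : Fin q → G := fun i => ((R.equivFin.symm (Fin.castLE hqR i)) : G) with hxa
  have xmem : ∀ i, xa i ∈ R := fun i => (R.equivFin.symm _).2
  have xinj : Function.Injective xa := by
    intro i j hij
    exact Fin.castLE_injective hqR (R.equivFin.symm.injective (Subtype.ext hij))
  set ta : Fin q × Bool → G := fun ib =>
    ((S'.equivFin.symm ⟨2 * ib.1.val + (if ib.2 then 1 else 0), by
      have h1 : ib.1.val < q := ib.1.isLt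
      split <;> omega⟩) : G) with hta
  have tamem : ∀ ib, ta ib ∈ S' := fun ib => (S'.equivFin.symm _).2
  have tainj : Function.Injective ta := by
    rintro ⟨i, b⟩ ⟨j, c⟩ hij
    have h1 := S'.equivFin.symm.injective (Subtype.ext hij)
    have h2 : 2 * i.val + (if b then 1 else 0) = 2 * j.val + (if c then 1 else 0) := by
      simpa using congrArg Fin.val h1
    have hb : b = c := by rcases b <;> rcases c <;> simp at h2 ⊢ <;> omega
    subst hb
    have : i = j := Fin.ext (by omega)
    rw [this]
  set ya : Fin q × Bool → G := fun ib => if ib.2 then (xa ib.1)⁻¹ else xa ib.1 with hya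
  have hxC : ∀ i, xa i ∈ C' := fun i => hRC (xmem i)
  have hx1 : ∀ i, xa i ≠ 1 := fun i => Finset.ne_of_mem_erase (hxC i)
  have hxCm : ∀ i, xa i ∈ C := fun i => Finset.mem_of_mem_erase (hxC i)
  have hxodd : ∀ i, Odd (orderOf (xa i)) := by
    intro i
    have := hxCm i; rw [hC, Finset.mem_filter] at this; exact this.2.1
  have hxcomm : ∀ i (t : G), orderOf t = 2 → Commute t (xa i) := by
    intro i t ht
    have := hxCm i; rw [hC, Finset.mem_filter] at this
    exact this.2.2 t ht
  have hyodd : ∀ ib, Odd (orderOf (ya ib)) := by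
    rintro ⟨i, b⟩
    rcases b <;> simp only [hya, if_true, if_false, Bool.false_eq_true, orderOf_inv]
      <;> exact hxodd i
  have hyne1 : ∀ ib, ya ib ≠ 1 := by
    rintro ⟨i, b⟩
    rcases b <;> simp only [hya, if_true, if_false, Bool.false_eq_true, ne_eq, inv_eq_one]
      <;> exact hx1 i
  have hycomm : ∀ (ib) (t : G), orderOf t = 2 → Commute t (ya ib) := by
    rintro ⟨i, b⟩ t ht
    rcases b <;> simp only [hya, if_true, if_false, Bool.false_eq_true]
    · exact hxcomm i t ht
    · exact (hxcomm i t ht).inv_right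
  have hyinv : ∀ i b, (ya (i, b))⁻¹ = ya (i, !b) := by
    intro i b
    rcases b <;> simp [hya]
  have hyord3 : ∀ ib, 3 ≤ orderOf (ya ib) := by
    intro ib
    have h1 := hyodd ib
    have h3 : orderOf (ya ib) ≠ 1 := fun e => hyne1 ib (orderOf_eq_one_iff.mp e)
    rcases h1 with ⟨m, hm⟩; omega
  have yaf : ∀ i, ya (i, false) = xa i := fun i => by simp [hya]
  have yat : ∀ i, ya (i, true) = (xa i)⁻¹ := fun i => by simp [hya]
  have hyinj : Function.Injective ya := by
    rintro ⟨i, b⟩ ⟨j, c⟩ hij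
    rcases b <;> rcases c
    · rw [yaf, yaf] at hij; rw [xinj hij]
    · rw [yaf, yat] at hij
      exact absurd (hij ▸ xmem i) (hRinv _ (xmem j))
    · rw [yat, yaf] at hij
      exact absurd (by rw [hij]; exact xmem j) (hRinv _ (xmem i))
    · rw [yat, yat] at hij
      rw [xinj (inv_injective hij)]
  have hta2 : ∀ ib, orderOf (ta ib) = 2 := by
    intro ib
    have := Finset.mem_of_mem_erase (tamem ib)
    rw [hS, Finset.mem_filter] at this; exact this.2
  have htane : ∀ ib, ta ib ≠ t₀ := fun ib => Finset.ne_of_mem_erase (tamem ib)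
  have htacomm : ∀ ib, Commute (ta ib) (ya ib) := fun ib => hycomm ib _ (hta2 ib)
  have htasq : ∀ ib, (ta ib) ^ 2 = 1 := fun ib => sq1 _ (hta2 ib)
  have hordty : ∀ ib, orderOf (ta ib * ya ib) = 2 * orderOf (ya ib) :=
    fun ib => orderOf_invol_mul (hta2 ib) (hyodd ib) (htacomm ib)
  have hordty' : ∀ ib, orderOf (ta ib * (ya ib)⁻¹) = 2 * orderOf (ya ib) := by
    intro ib
    rw [orderOf_invol_mul (hta2 ib) (by rw [orderOf_inv]; exact hyodd ib)
      ((htacomm ib).inv_right), orderOf_inv]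
  -- the partner function
  set σ : G → G := fun g =>
    if g = 1 then t₀
    else if g = t₀ then 1
    else if h3 : ∃ ib, ta ib = g then ta h3.choose * ya h3.choose
    else if h4 : ∃ ib, ya ib = g then ta h4.choose * (ya h4.choose)⁻¹
    else if h5 : ∃ ib, ta ib * ya ib = g then ta h5.choose
    else if h6 : ∃ ib, ta ib * (ya ib)⁻¹ = g then ya h6.choose
    else g⁻¹
    with hσ
  have E1 : σ 1 = t₀ := by simp only [hσ, if_pos rfl]
  have E2 : σ t₀ = 1 := by
    simp only [hσ]
    rw [if_neg ht₀1, if_pos trivial]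
  have taneq1 : ∀ ib, ta ib ≠ 1 := by
    intro ib e
    have := hta2 ib; rw [e, orderOf_one] at this; omega
  have E3 : ∀ ib, σ (ta ib) = ta ib * ya ib := by
    intro ib
    have h3 : ∃ ib', ta ib' = ta ib := ⟨ib, rfl⟩
    simp only [hσ]
    rw [if_neg (taneq1 ib), if_neg (htane ib), dif_pos h3, tainj h3.choose_spec]
  have yane1 : ∀ ib, ya ib ≠ 1 := hyne1
  have yanet₀ : ∀ ib, ya ib ≠ t₀ := by
    intro ib e
    have := hyord3 ib; rw [e, ht₀] at this; omega
  have yaneta : ∀ ib, ¬ ∃ c, ta c = ya ib := by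
    rintro ib ⟨c, hc⟩
    have h1 := hta2 c
    rw [hc] at h1
    have := hyord3 ib; omega
  have E4 : ∀ ib, σ (ya ib) = ta ib * (ya ib)⁻¹ := by
    intro ib
    have h4 : ∃ ib', ya ib' = ya ib := ⟨ib, rfl⟩
    simp only [hσ]
    rw [if_neg (yane1 ib), if_neg (yanet₀ ib), dif_neg (yaneta ib), dif_pos h4,
      hyinj h4.choose_spec]
  have tyne1 : ∀ ib, ta ib * ya ib ≠ 1 := by
    intro ib e
    have h1 := hordty ib; rw [e, orderOf_one] at h1
    have := hyord3 ib; omega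
  have tynet₀ : ∀ ib, ta ib * ya ib ≠ t₀ := by
    intro ib e
    have h1 := hordty ib; rw [e, ht₀] at h1
    have := hyord3 ib; omega
  have tyneta : ∀ ib, ¬ ∃ c, ta c = ta ib * ya ib := by
    rintro ib ⟨c, hc⟩
    have h1 := hta2 c; rw [hc, hordty ib] at h1
    have := hyord3 ib; omega
  have tyneya : ∀ ib, ¬ ∃ c, ya c = ta ib * ya ib := by
    rintro ib ⟨c, hc⟩
    have h1 := hyodd c; rw [hc, hordty ib] at h1
    rcases h1 with ⟨m, hm⟩; omega
  have E5 : ∀ ib, σ (ta ib * ya ib) = ta ib := by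
    intro ib
    have h5 : ∃ c, ta c * ya c = ta ib * ya ib := ⟨ib, rfl⟩
    simp only [hσ]
    rw [if_neg (tyne1 ib), if_neg (tynet₀ ib), dif_neg (tyneta ib), dif_neg (tyneya ib),
      dif_pos h5]
    exact (prod_invol_odd_inj (htasq _) (htasq ib) (hyodd _) (hyodd ib)
      (htacomm _) (htacomm ib) h5.choose_spec).1
  have tyne1' : ∀ ib, ta ib * (ya ib)⁻¹ ≠ 1 := by
    intro ib e
    have h1 := hordty' ib; rw [e, orderOf_one] at h1
    have := hyord3 ib; omega
  have tynet₀' : ∀ ib, ta ib * (ya ib)⁻¹ ≠ t₀ := by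
    intro ib e
    have h1 := hordty' ib; rw [e, ht₀] at h1
    have := hyord3 ib; omega
  have tyneta' : ∀ ib, ¬ ∃ c, ta c = ta ib * (ya ib)⁻¹ := by
    rintro ib ⟨c, hc⟩
    have h1 := hta2 c; rw [hc, hordty' ib] at h1
    have := hyord3 ib; omega
  have tyneya' : ∀ ib, ¬ ∃ c, ya c = ta ib * (ya ib)⁻¹ := by
    rintro ib ⟨c, hc⟩
    have h1 := hyodd c; rw [hc, hordty' ib] at h1
    rcases h1 with ⟨m, hm⟩; omega
  have tynety' : ∀ ib, ¬ ∃ c, ta c * ya c = ta ib * (ya ib)⁻¹ := by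
    rintro ib ⟨c, hc⟩
    obtain ⟨h1, h2⟩ := prod_invol_odd_inj (htasq c) (htasq ib) (hyodd c)
      (by rw [orderOf_inv]; exact hyodd ib) (htacomm c) ((htacomm ib).inv_right) hc
    have hcib : c = ib := tainj h1
    subst hcib
    have e2 : ya c * ya c = 1 := by nth_rewrite 2 [h2]; exact mul_inv_cancel _
    have hdvd : orderOf (ya c) ∣ 2 := orderOf_dvd_of_pow_eq_one (by rw [pow_two]; exact e2)
    have := Nat.le_of_dvd (by norm_num) hdvd
    have := hyord3 c; omega
  have E6 : ∀ ib, σ (ta ib * (ya ib)⁻¹) = ya ib := by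
    intro ib
    have h6 : ∃ c, ta c * (ya c)⁻¹ = ta ib * (ya ib)⁻¹ := ⟨ib, rfl⟩
    simp only [hσ]
    rw [if_neg (tyne1' ib), if_neg (tynet₀' ib), dif_neg (tyneta' ib), dif_neg (tyneya' ib),
      dif_neg (tynety' ib), dif_pos h6]
    obtain ⟨h1, h2⟩ := prod_invol_odd_inj (htasq _) (htasq ib)
      (by rw [orderOf_inv]; exact hyodd _) (by rw [orderOf_inv]; exact hyodd ib)
      ((htacomm _).inv_right) ((htacomm ib).inv_right) h6.choose_spec
    rw [tainj h1]
  have E7 : ∀ g : G, g ≠ 1 → g ≠ t₀ → (¬ ∃ ib, ta ib = g) → (¬ ∃ ib, ya ib = g) →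
      (¬ ∃ ib, ta ib * ya ib = g) → (¬ ∃ ib, ta ib * (ya ib)⁻¹ = g) → σ g = g⁻¹ := by
    intro g hg1 hg2 hg3 hg4 hg5 hg6
    simp only [hσ]
    rw [if_neg hg1, if_neg hg2, dif_neg hg3, dif_neg hg4, dif_neg hg5, dif_neg hg6]
  -- the matched vertex set
  set A : Set G := {g | orderOf g ≠ 2 ∨ g = t₀ ∨ ∃ ib, ta ib = g} with hA
  have main : ∀ g ∈ A, σ g ∈ A ∧ σ (σ g) = g ∧ (powerGraph G).Adj g (σ g) := by
    intro g hg
    by_cases hg1 : g = 1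
    · subst hg1
      refine ⟨?_, by rw [E1, E2], ?_⟩
      · rw [E1]; exact Or.inr (Or.inl rfl)
      · rw [E1]
        show _ ≠ _ ∧ _
        exact ⟨fun e => ht₀1 e.symm, Or.inl ⟨2, sq1 t₀ ht₀⟩⟩
    by_cases hg2 : g = t₀
    · refine ⟨?_, ?_, ?_⟩
      · rw [hg2, E2]; exact Or.inl (by rw [orderOf_one]; omega)
      · rw [hg2, E2, E1]
      · rw [hg2, E2]
        show _ ≠ _ ∧ _
        exact ⟨ht₀1, Or.inr ⟨2, sq1 t₀ ht₀⟩⟩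
    by_cases hg3 : ∃ ib, ta ib = g
    · obtain ⟨ib, rfl⟩ := hg3
      refine ⟨?_, by rw [E3, E5], ?_⟩
      · rw [E3]
        refine Or.inl ?_
        have h1 := hordty ib; have h2 := hyord3 ib; omega
      · rw [E3]
        show _ ≠ _ ∧ _
        refine ⟨?_, Or.inl ⟨orderOf (ya ib),
          invol_mul_pow_orderOf (htasq ib) (hyodd ib) (htacomm ib)⟩⟩
        intro e
        have h1 := hordty ib
        rw [← e, hta2 ib] at h1
        have := hyord3 ib; omega
    by_cases hg4 : ∃ ib, ya ib = g
    · obtain ⟨ib, rfl⟩ := hg4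
      refine ⟨?_, by rw [E4, E6], ?_⟩
      · rw [E4]
        refine Or.inl ?_
        have h1 := hordty' ib; have h2 := hyord3 ib; omega
      · rw [E4]
        show _ ≠ _ ∧ _
        refine ⟨?_, Or.inl ⟨orderOf (ya ib) - 1,
          invol_mul_inv_pow (htasq ib) (hyodd ib) (htacomm ib)⟩⟩
        intro e
        have h1 := hordty' ib
        rw [← e] at h1
        have := hyord3 ib; omega
    by_cases hg5 : ∃ ib, ta ib * ya ib = g
    · obtain ⟨ib, rfl⟩ := hg5
      refine ⟨?_, by rw [E5, E3], ?_⟩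
      · rw [E5]; exact Or.inr (Or.inr ⟨ib, rfl⟩)
      · rw [E5]
        show _ ≠ _ ∧ _
        refine ⟨?_, Or.inr ⟨orderOf (ya ib),
          invol_mul_pow_orderOf (htasq ib) (hyodd ib) (htacomm ib)⟩⟩
        intro e
        have h1 := hordty ib
        rw [e, hta2 ib] at h1
        have := hyord3 ib; omega
    by_cases hg6 : ∃ ib, ta ib * (ya ib)⁻¹ = g
    · obtain ⟨ib, rfl⟩ := hg6
      refine ⟨?_, by rw [E6, E4], ?_⟩
      · rw [E6]
        refine Or.inl ?_
        intro e
        have := hyodd ib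
        rw [e] at this
        rcases this with ⟨m, hm⟩; omega
      · rw [E6]
        show _ ≠ _ ∧ _
        refine ⟨?_, Or.inr ⟨orderOf (ya ib) - 1,
          invol_mul_inv_pow (htasq ib) (hyodd ib) (htacomm ib)⟩⟩
        intro e
        have h1 := hordty' ib
        rw [e] at h1
        have := hyord3 ib; omega
    -- default case
    have hgo2 : orderOf g ≠ 2 := by
      rw [hA] at hg
      rcases hg with h' | h' | h'
      · exact h'
      · exact absurd h' hg2
      · exact absurd h' hg3
    have hgo1 : orderOf g ≠ 1 := fun e => hg1 (orderOf_eq_one_iff.mp e)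
    have hE : σ g = g⁻¹ := E7 g hg1 hg2 hg3 hg4 hg5 hg6
    have hginv1 : g⁻¹ ≠ 1 := inv_ne_one.mpr hg1
    have hginv2 : g⁻¹ ≠ t₀ := by
      intro e
      exact hg2 (by rw [← inv_inv g, e, inv_self t₀ ht₀])
    have hginv3 : ¬ ∃ ib, ta ib = g⁻¹ := by
      rintro ⟨ib, e⟩
      exact hg3 ⟨ib, by rw [← inv_self _ (hta2 ib), e, inv_inv]⟩
    have hginv4 : ¬ ∃ ib, ya ib = g⁻¹ := by
      rintro ⟨⟨i, b⟩, e⟩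
      exact hg4 ⟨(i, !b), by rw [← hyinv i b, e, inv_inv]⟩
    have hginv5 : ¬ ∃ c, ta c * ya c = g⁻¹ := by
      rintro ⟨c, e⟩
      refine hg6 ⟨c, ?_⟩
      have hrw : ta c * (ya c)⁻¹ = (ta c * ya c)⁻¹ := by
        rw [mul_inv_rev, inv_self _ (hta2 c)]
        exact ((htacomm c).inv_right).eq
      rw [hrw, e, inv_inv]
    have hginv6 : ¬ ∃ c, ta c * (ya c)⁻¹ = g⁻¹ := by
      rintro ⟨c, e⟩
      refine hg5 ⟨c, ?_⟩
      have hrw : ta c * ya c = (ta c * (ya c)⁻¹)⁻¹ := by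
        rw [mul_inv_rev, inv_inv, inv_self _ (hta2 c)]
        exact (htacomm c).eq
      rw [hrw, e, inv_inv]
    have hE2 : σ g⁻¹ = g := by
      rw [E7 g⁻¹ hginv1 hginv2 hginv3 hginv4 hginv5 hginv6, inv_inv]
    refine ⟨?_, by rw [hE, hE2], ?_⟩
    · rw [hE]
      exact Or.inl (by rw [orderOf_inv]; exact hgo2)
    · rw [hE]
      have hne : g ≠ g⁻¹ := by
        intro e
        rcases hdvd2 g e.symm with h' | h' <;> [exact hgo1 h'; exact hgo2 h']
      show _ ≠ _ ∧ _
      refine ⟨hne, Or.inr ⟨orderOf g - 1, ?_⟩⟩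
      rw [eq_inv_iff_mul_eq_one, ← pow_succ, Nat.sub_add_cancel (orderOf_pos g), pow_orderOf_eq_one]
  obtain ⟨M, hM, hMv⟩ := matching_of_involution (powerGraph G) A σ
    (fun v hv => (main v hv).1) (fun v hv => (main v hv).2.1) (fun v hv => (main v hv).2.2)
  refine ⟨M, hM, ?_⟩
  rw [hMv]
  -- counting
  have himage : Finset.image ta Finset.univ ⊆ S' := by
    intro x hx
    rw [Finset.mem_image] at hx
    obtain ⟨ib, -, rfl⟩ := hx
    exact tamem ib
  have hsub : Aᶜ ⊆ (↑(S' \ Finset.image ta Finset.univ) : Set G) := by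
    intro g hg
    rw [hA] at hg
    simp only [Set.mem_compl_iff, Set.mem_setOf_eq, not_or, not_exists] at hg
    obtain ⟨h2', hgt, hgr⟩ := hg
    rw [Finset.mem_coe, Finset.mem_sdiff]
    constructor
    · rw [hS', Finset.mem_erase, hS, Finset.mem_filter]
      exact ⟨hgt, Finset.mem_univ _, not_not.mp h2'⟩
    · rw [Finset.mem_image]
      rintro ⟨ib, -, e⟩
      exact hgr ib e
  have hcount : (S' \ Finset.image ta Finset.univ).card = S'.card - 2 * q := by
    rw [Finset.card_sdiff_of_subset himage, Finset.card_image_of_injective _ tainj]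
    congr 1
    simp [Finset.card_univ, mul_comm]
  have hSn : {t : G | orderOf t = 2}.ncard = S.card := by
    rw [← Set.ncard_coe_finset]
    congr 1
    ext g
    simp [hS]
  have hCn : {x : G | Odd (orderOf x) ∧ ∀ t : G, orderOf t = 2 → t * x = x * t}.ncard
      = C.card := by
    rw [← Set.ncard_coe_finset]
    congr 1
    ext g
    simp [hC]
  have hCcard : C.card = 2 * R.card + 1 := by
    have h1 : C'.card = C.card - 1 := Finset.card_erase_of_mem h1C
    have h2 : 1 ≤ C.card := Finset.card_pos.mpr ⟨1, h1C⟩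
    omega
  have hScard : S.card = 2 * p + 1 := by
    have h1 : S'.card = S.card - 1 := Finset.card_erase_of_mem ht₀S
    have h2 : 1 ≤ S.card := Finset.card_pos.mpr ⟨t₀, ht₀S⟩
    omega
  calc Aᶜ.ncard ≤ (↑(S' \ Finset.image ta Finset.univ) : Set G).ncard :=
        Set.ncard_le_ncard hsub (Set.toFinite _)
    _ = (S' \ Finset.image ta Finset.univ).card := Set.ncard_coe_finset _
    _ ≤ max 0 ({t : G | orderOf t = 2}.ncard -
        {x : G | Odd (orderOf x) ∧ ∀ t : G, orderOf t = 2 → t * x = x * t}.ncard) := by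
      rw [hcount, hSn, hCn, hScard, hCcard]
      have : q = min p R.card := hq
      omega
end

section
/- Let G be a finite group that is not an elementary abelian 2-group, and suppose the matching number of its power graph equals m. Then |G| < 8m + 4. -/
open SimpleGraph Finset

section Aux
variable {G : Type*} [Group G] [Fintype G] [DecidableEq G]

/-- If more than 3/4 of the elements are involutions, every element squares to 1. -/
lemma inv_bound (hI : 3 * Fintype.card G <
    4 * (univ.filter (fun x : G => x ^ 2 = 1)).card) :
    ∀ g : G, g ^ 2 = 1 := by
  classical
  set n := Fintype.card G with hn
  have hnc : Nat.card G = n := Nat.card_eq_fintype_card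
  set I : Finset G := univ.filter (fun x : G => x ^ 2 = 1) with hIdef
  -- every involution is central
  have central : ∀ a : G, a ^ 2 = 1 → ∀ b : G, a * b = b * a := by
    intro a ha
    have haa : a * a = 1 := by rw [← sq]; exact ha
    set C : Subgroup G := Subgroup.centralizer {a} with hC
    have hsub : I ∩ I.image (fun x => a * x) ⊆ univ.filter (fun x => x ∈ C) := by
      intro b hb
      simp only [Finset.mem_inter, Finset.mem_image, hIdef, Finset.mem_filter,
        Finset.mem_univ, true_and] at hb
      obtain ⟨hb2, c, hc2, hcb⟩ := hb
      have hbb : b * b = 1 := by rw [← sq]; exact hb2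
      have habc : a * b = c := by rw [← hcb, ← mul_assoc, haa, one_mul]
      have hab : (a * b) * (a * b) = 1 := by rw [habc, ← sq]; exact hc2
      have h1 : a * b = b⁻¹ * a⁻¹ := by
        rw [← mul_inv_rev]; exact eq_inv_of_mul_eq_one_left hab
      have hba : a * b = b * a := by
        rw [h1, inv_eq_of_mul_eq_one_left hbb, inv_eq_of_mul_eq_one_left haa]
      refine Finset.mem_filter.mpr ⟨Finset.mem_univ _, ?_⟩
      exact Subgroup.mem_centralizer_singleton_iff.mpr hba.symm
    have hcardim : (I.image (fun x => a * x)).card = I.card :=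
      Finset.card_image_of_injective _ (mul_right_injective a)
    have hunion : (I ∪ I.image (fun x => a * x)).card ≤ n :=
      Finset.card_le_univ _
    have hinter : n < 2 * (I ∩ I.image (fun x => a * x)).card := by
      have := Finset.card_inter_add_card_union I (I.image (fun x => a * x))
      have hIn : I.card ≤ n := Finset.card_le_univ _
      omega
    have hCcard : n < 2 * Nat.card C := by
      have h1 : (I ∩ I.image (fun x => a * x)).card ≤
          (univ.filter (fun x => x ∈ C)).card := Finset.card_le_card hsub
      have h2 : Nat.card C = (univ.filter (fun x => x ∈ C)).card := by
        rw [Nat.card_eq_fintype_card, Fintype.card_subtype]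
      omega
    have hdvd : Nat.card C ∣ n := by
      rw [← hnc]; exact Subgroup.card_subgroup_dvd_card C
    have hCtop : C = ⊤ := by
      apply Subgroup.eq_top_of_le_card
      rw [hnc]
      obtain ⟨k, hk⟩ := hdvd
      rcases k with - | - | k
      · omega
      · omega
      · nlinarith [Nat.card_pos (α := C)]
    intro b
    have : b ∈ C := hCtop ▸ Subgroup.mem_top b
    exact (Subgroup.mem_centralizer_singleton_iff.mp this).symm
  -- involutions form a subgroup
  set H : Subgroup G :=
    { carrier := {x : G | x ^ 2 = 1}
      one_mem' := by simp
      mul_mem' := by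
        intro a b ha hb
        simp only [Set.mem_setOf_eq] at *
        have hcomm := central a ha b
        have : (a * b) ^ 2 = a ^ 2 * b ^ 2 := by
          rw [sq, sq, sq]
          calc a * b * (a * b) = a * (b * a) * b := by group
            _ = a * (a * b) * b := by rw [← hcomm]
            _ = a * a * (b * b) := by group
        rw [this, ha, hb, one_mul]
      inv_mem' := by
        intro a ha
        simp only [Set.mem_setOf_eq] at *
        rw [inv_pow, ha, inv_one] } with hH
  have hmemH : ∀ x : G, x ∈ H ↔ x ^ 2 = 1 := fun x => Iff.rfl
  have hHcard : Nat.card H = I.card := by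
    rw [Nat.card_eq_fintype_card, Fintype.card_subtype, hIdef]
    congr 1
    ext x
    simp only [Finset.mem_filter, Finset.mem_univ, true_and, hmemH x]
  have hHtop : H = ⊤ := by
    apply Subgroup.eq_top_of_le_card
    rw [hnc, hHcard]
    obtain ⟨k, hk⟩ : Nat.card H ∣ n := by
      rw [← hnc]; exact Subgroup.card_subgroup_dvd_card H
    rw [hHcard] at hk
    have hIpos : 0 < I.card := by omega
    rcases k with - | - | k
    · omega
    · omega
    · nlinarith
  intro g
  exact (hmemH g).mp (hHtop ▸ Subgroup.mem_top g)
end Aux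

theorem stmt10 (G : Type*) [Group G] [Fintype G] (h : ¬ ∀ g : G, g ^ 2 = 1)
    (m : ℕ) (hm : matchingNumber (powerGraph G) = m) :
    Fintype.card G < 8 * m + 4 := by
  classical
  set n := Fintype.card G with hn
  have inv_ne : ∀ x : G, x ^ 2 ≠ 1 → x ≠ x⁻¹ := by
    intro x hx he
    apply hx
    rw [sq]
    nth_rewrite 2 [he]
    rw [mul_inv_cancel]
  have inv_sq : ∀ x : G, x ^ 2 ≠ 1 → x⁻¹ ^ 2 ≠ 1 := by
    intro x hx hc
    rw [inv_pow] at hc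
    exact hx (by rw [← inv_inv (x ^ 2), hc, inv_one])
  have pow_inv : ∀ x : G, ∃ k : ℕ, x ^ k = x⁻¹ := by
    intro x
    refine ⟨orderOf x - 1, ?_⟩
    have h1 : 1 ≤ orderOf x := orderOf_pos x
    have h2 : x ^ (orderOf x - 1) * x = 1 := by
      rw [← pow_succ, Nat.sub_add_cancel h1, pow_orderOf_eq_one]
    exact eq_inv_of_mul_eq_one_left h2
  set M : (powerGraph G).Subgraph :=
    { verts := {x : G | x ^ 2 ≠ 1}
      Adj := fun x y => x ^ 2 ≠ 1 ∧ y = x⁻¹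
      adj_sub := by
        rintro x y ⟨hx, rfl⟩
        exact ⟨inv_ne x hx, Or.inr (pow_inv x)⟩
      edge_vert := by rintro x y ⟨hx, rfl⟩; exact hx
      symm := by
        constructor
        rintro x y ⟨hx, rfl⟩
        exact ⟨inv_sq x hx, (inv_inv x).symm⟩ } with hM
  have hmatch : M.IsMatching := by
    intro v hv
    exact ⟨v⁻¹, ⟨hv, rfl⟩, fun w hw => hw.2⟩
  set T : Finset G := univ.filter (fun x : G => x ^ 2 ≠ 1) with hT
  set E : Finset (Sym2 G) := T.image (fun x => s(x, x⁻¹)) with hE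
  have hedge : M.edgeSet = ↑E := by
    ext e
    induction e using Sym2.ind with
    | _ x y =>
      rw [SimpleGraph.Subgraph.mem_edgeSet, Finset.mem_coe]
      constructor
      · rintro ⟨hx, rfl⟩
        exact Finset.mem_image_of_mem _ (by simp [hT, hx])
      · intro he
        obtain ⟨a, ha, hae⟩ := Finset.mem_image.mp he
        rw [hT, Finset.mem_filter] at ha
        rw [Sym2.eq_iff] at hae
        rcases hae with ⟨h1, h2⟩ | ⟨h1, h2⟩
        · subst h1; subst h2; exact ⟨ha.2, rfl⟩
        · subst h1; subst h2
          exact ⟨inv_sq _ ha.2, (inv_inv _).symm⟩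
  have hEcard : M.edgeSet.ncard = E.card := by rw [hedge, Set.ncard_coe_finset]
  have hbdd : BddAbove
      {k | ∃ N : (powerGraph G).Subgraph, N.IsMatching ∧ N.edgeSet.ncard = k} := by
    refine ⟨Fintype.card (Sym2 G), ?_⟩
    rintro k ⟨N, -, rfl⟩
    have : N.edgeSet.ncard ≤ (Set.univ : Set (Sym2 G)).ncard :=
      Set.ncard_le_ncard (Set.subset_univ _) Set.finite_univ
    simpa [Set.ncard_univ] using this
  have hmem : E.card ∈
      {k | ∃ N : (powerGraph G).Subgraph, N.IsMatching ∧ N.edgeSet.ncard = k} :=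
    ⟨M, hmatch, hEcard⟩
  have hEm : E.card ≤ m := hm ▸ le_csSup hbdd hmem
  have hTE : T.card ≤ 2 * E.card := by
    have hmap : ∀ x ∈ T, s(x, x⁻¹) ∈ E := fun x hx => Finset.mem_image_of_mem _ hx
    rw [Finset.card_eq_sum_card_fiberwise hmap]
    have hfib : ∀ e ∈ E, (T.filter (fun x => s(x, x⁻¹) = e)).card ≤ 2 := by
      intro e he
      obtain ⟨a, -, rfl⟩ := Finset.mem_image.mp he
      have hss : T.filter (fun x => s(x, x⁻¹) = s(a, a⁻¹)) ⊆ {a, a⁻¹} := by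
        intro x hx
        rw [Finset.mem_filter, Sym2.eq_iff] at hx
        rcases hx.2 with ⟨h1, -⟩ | ⟨h1, -⟩ <;> simp [h1]
      calc (T.filter (fun x => s(x, x⁻¹) = s(a, a⁻¹))).card
          ≤ ({a, a⁻¹} : Finset G).card := Finset.card_le_card hss
        _ ≤ 2 := (Finset.card_insert_le _ _).trans (by simp)
    calc ∑ e ∈ E, (T.filter (fun x => s(x, x⁻¹) = e)).card
        ≤ ∑ _e ∈ E, 2 := Finset.sum_le_sum hfib
      _ = 2 * E.card := by rw [Finset.sum_const, smul_eq_mul, mul_comm]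
  have hIbound : ¬ (3 * n < 4 * (univ.filter (fun x : G => x ^ 2 = 1)).card) :=
    fun hc => h (inv_bound hc)
  have hsplit : (univ.filter (fun x : G => x ^ 2 = 1)).card + T.card = n := by
    have := Finset.card_filter_add_card_filter_not
      (s := (univ : Finset G)) (p := fun x : G => x ^ 2 = 1)
    simpa [hT, hn, Finset.card_univ] using this
  omega
end

section
/- If G is a finite group whose power graph has matching number 1, then G is an elementary abelian 2-group or the cyclic group of order 3. -/
open SimpleGraph

/-- Two disjoint edges force matching number at least 2. -/
lemma two_le_matchingNumber {V : Type*} [Fintype V] (Γ : SimpleGraph V) {a b c d : V}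
    (hab : Γ.Adj a b) (hcd : Γ.Adj c d)
    (hac : a ≠ c) (had : a ≠ d) (hbc : b ≠ c) (hbd : b ≠ d) :
    2 ≤ matchingNumber Γ := by
  classical
  have hM : (Γ.subgraphOfAdj hab).IsMatching := Subgraph.IsMatching.subgraphOfAdj hab
  have hN : (Γ.subgraphOfAdj hcd).IsMatching := Subgraph.IsMatching.subgraphOfAdj hcd
  have hdisj : Disjoint (Γ.subgraphOfAdj hab).support (Γ.subgraphOfAdj hcd).support := by
    rw [hM.support_eq_verts, hN.support_eq_verts, subgraphOfAdj_verts, subgraphOfAdj_verts]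
    rw [Set.disjoint_iff_forall_ne]
    rintro x (rfl | rfl) y (rfl | rfl) <;> simp_all
  have hsup : (Γ.subgraphOfAdj hab ⊔ Γ.subgraphOfAdj hcd).IsMatching := hM.sup hN hdisj
  have hedge : (Γ.subgraphOfAdj hab ⊔ Γ.subgraphOfAdj hcd).edgeSet.ncard = 2 := by
    rw [Subgraph.edgeSet_sup, edgeSet_subgraphOfAdj, edgeSet_subgraphOfAdj,
      Set.singleton_union]
    refine Set.ncard_pair ?_
    simp only [ne_eq, Sym2.eq, Sym2.rel_iff', Prod.mk.injEq, Prod.swap_prod_mk]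
    push_neg
    exact ⟨fun h => absurd h hac, fun h => absurd h had⟩
  have hmem : 2 ∈ {n | ∃ M : Γ.Subgraph, M.IsMatching ∧ M.edgeSet.ncard = n} :=
    ⟨_, hsup, hedge⟩
  refine le_csSup ⟨Nat.card (Sym2 V), ?_⟩ hmem
  rintro n ⟨M, _, rfl⟩
  calc M.edgeSet.ncard ≤ (Set.univ : Set (Sym2 V)).ncard :=
        Set.ncard_le_ncard (Set.subset_univ _) Set.finite_univ
    _ = Nat.card (Sym2 V) := Set.ncard_univ _

theorem stmt11 (G : Type*) [Group G] [Fintype G]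
    (h : matchingNumber (powerGraph G) = 1) :
    (∀ g : G, g ^ 2 = 1) ∨ Nonempty (G ≃* Multiplicative (ZMod 3)) := by
  classical
  have adj_pow : ∀ (x : G) (n : ℕ), x ≠ x ^ n → (powerGraph G).Adj x (x ^ n) :=
    fun x n hx => ⟨hx, Or.inr ⟨n, rfl⟩⟩
  have adj_one : ∀ (x : G), x ≠ 1 → (powerGraph G).Adj x 1 :=
    fun x hx => ⟨hx, Or.inr ⟨0, pow_zero x⟩⟩
  have no2 : ∀ {a b c d : G}, (powerGraph G).Adj a b → (powerGraph G).Adj c d →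
      a ≠ c → a ≠ d → b ≠ c → b ≠ d → False := by
    intro a b c d hab hcd h1 h2 h3 h4
    have := two_le_matchingNumber (powerGraph G) hab hcd h1 h2 h3 h4
    omega
  -- basic facts for elements with y^2 ≠ 1
  have ne1 : ∀ y : G, y ^ 2 ≠ 1 → y ≠ 1 := by
    intro y hy h1; exact hy (by rw [h1, one_pow])
  have nesq : ∀ y : G, y ^ 2 ≠ 1 → y ≠ y ^ 2 := by
    intro y hy he
    apply ne1 y hy
    have : y * 1 = y * y := by rw [mul_one]; rw [sq] at he; exact he
    exact (mul_left_cancel this).symm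
  have sq_ne_one : ∀ y : G, y ^ 2 ≠ 1 → y ^ 2 ≠ 1 := fun _ hy => hy
  have ord3 : ∀ y : G, y ^ 2 ≠ 1 → orderOf y = 3 := by
    intro y hy
    have hy1 : y ≠ 1 := ne1 y hy
    have hord2 : orderOf y ≠ 2 := fun he => hy (he ▸ pow_orderOf_eq_one y)
    have hord1 : orderOf y ≠ 1 := fun he => hy1 (orderOf_eq_one_iff.mp he)
    have hpos : 0 < orderOf y := orderOf_pos y
    by_contra hne
    have h4 : 4 ≤ orderOf y := by omega
    have hy3 : y ^ 3 ≠ 1 := by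
      intro he
      have := Nat.le_of_dvd (by norm_num) (orderOf_dvd_of_pow_eq_one he)
      omega
    have hyy3 : y ≠ y ^ 3 := by
      intro he
      apply hy
      have : 1 * y = y ^ 2 * y := by
        rw [one_mul, ← pow_succ]; exact he
      exact (mul_right_cancel this).symm
    have hy2y3 : y ^ 2 ≠ y ^ 3 := by
      intro he
      apply hy1
      have : y ^ 2 * 1 = y ^ 2 * y := by rw [mul_one, ← pow_succ]; exact he
      exact (mul_left_cancel this).symm
    exact no2 (adj_pow y 2 (nesq y hy)) (adj_one (y ^ 3) hy3)
      hyy3 hy1 hy2y3 hy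
  by_cases hall : ∀ g : G, g ^ 2 = 1
  · exact Or.inl hall
  push_neg at hall
  obtain ⟨g, hg⟩ := hall
  have hg3 : orderOf g = 3 := ord3 g hg
  have hgpow3 : g ^ 3 = 1 := hg3 ▸ pow_orderOf_eq_one g
  have hg1 : g ≠ 1 := ne1 g hg
  have hgsq : g ≠ g ^ 2 := nesq g hg
  -- every element is 1, g, or g^2
  have hcov : ∀ x : G, x = 1 ∨ x = g ∨ x = g ^ 2 := by
    intro x
    by_contra hx
    push_neg at hx
    obtain ⟨hx1, hxg, hxg2⟩ := hx
    by_cases hx2 : x ^ 2 = 1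
    · -- edge {x, 1} disjoint from {g, g^2}
      exact no2 (adj_pow g 2 hgsq) (adj_one x hx1)
        (fun he => hxg he.symm) hg1 (fun he => hxg2 he.symm) hg
    · have hxo : orderOf x = 3 := ord3 x hx2
      have hx3 : x ^ 3 = 1 := hxo ▸ pow_orderOf_eq_one x
      have hx4 : x ^ 4 = x := by
        rw [show (4:ℕ) = 3 + 1 from rfl, pow_succ, hx3, one_mul]
      have hg4 : g ^ 4 = g := by
        rw [show (4:ℕ) = 3 + 1 from rfl, pow_succ, hgpow3, one_mul]
      have h1 : g ≠ x ^ 2 := by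
        intro he
        apply hxg2
        have : g ^ 2 = x ^ 4 := by rw [he, ← pow_mul]
        rw [hx4] at this
        exact this.symm
      have h2 : g ^ 2 ≠ x ^ 2 := by
        intro he
        apply hxg
        have : g ^ 4 = x ^ 4 := by
          rw [show (4:ℕ) = 2*2 from rfl, pow_mul, pow_mul, he]
        rw [hx4, hg4] at this
        exact this.symm
      exact no2 (adj_pow g 2 hgsq) (adj_pow x 2 (nesq x hx2))
        (fun he => hxg he.symm) h1 (fun he => hxg2 he.symm) h2
  have hcard : Fintype.card G = 3 := by
    have huniv : (Finset.univ : Finset G) = {1, g, g ^ 2} := by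
      ext x
      simpa using hcov x
    rw [← Finset.card_univ, Finset.card_eq_three]
    exact ⟨1, g, g ^ 2, fun he => hg1 he.symm, fun he => hg he.symm,
      hgsq, huniv⟩
  have hncard : Nat.card G = 3 := by rw [Nat.card_eq_fintype_card, hcard]
  have hc : IsCyclic G := by
    haveI : Fact (Nat.Prime 3) := ⟨by norm_num⟩
    exact isCyclic_of_prime_card hncard
  have e := (zmodCyclicMulEquiv hc).symm
  rw [hncard] at e
  exact Or.inr ⟨e⟩
end

section
/- If G is a finite group whose power graph has matching number 2, then G is isomorphic to C₄, C₅, D₃ (= S₃), or D₄ (dihedral of order 8). -/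
open SimpleGraph

section Aux

lemma aux_dihedral {G : Type*} [Group G] (n : ℕ) [NeZero n] (x t : G)
    (hx : orderOf x = n) (ht2 : t * t = 1)
    (hc : t * x * t = x⁻¹)
    (hts : t ∉ Subgroup.zpowers x)
    (hall : ∀ g : G, g ∈ Subgroup.zpowers x ∨ t * g ∈ Subgroup.zpowers x) :
    Nonempty (G ≃* DihedralGroup n) := by
  have hnz : (n : ℕ) ≠ 0 := NeZero.ne n
  have hti : t⁻¹ = t := inv_eq_of_mul_eq_one_right ht2
  have hmod : ∀ k : ℕ, x ^ (k % n) = x ^ k := by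
    intro k; rw [← hx]; exact pow_mod_orderOf x k
  have hA : ∀ i j : ZMod n, x ^ (i + j).val = x ^ i.val * x ^ j.val := by
    intro i j
    rw [ZMod.val_add, hmod, pow_add]
  have hB : ∀ i : ZMod n, x ^ (-i).val = (x ^ i.val)⁻¹ := by
    intro i
    have : x ^ (-i).val * x ^ i.val = 1 := by
      rw [← hA, neg_add_cancel, ZMod.val_zero, pow_zero]
    exact eq_inv_of_mul_eq_one_left this
  have hC : ∀ k : ℕ, t * x ^ k * t = (x ^ k)⁻¹ := by
    intro k
    have h1 := map_pow (MulAut.conj t) x k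
    simp only [MulAut.conj_apply, hti, hc] at h1
    rw [h1, inv_pow]
  have hD : ∀ i : ZMod n, x ^ i.val * t = t * x ^ (-i).val := by
    intro i
    rw [hB]
    calc x ^ i.val * t = t * (t * x ^ i.val * t) := by
          rw [← mul_assoc, ← mul_assoc, ht2, one_mul]
      _ = t * (x ^ i.val)⁻¹ := by rw [hC i.val]
  let f : DihedralGroup n → G := fun g =>
    match g with
    | .r i => x ^ i.val
    | .sr i => t * x ^ i.val
  have hmul : ∀ a b : DihedralGroup n, f (a * b) = f a * f b := by
    rintro (i | i) (j | j)
    · exact hA i j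
    · show t * x ^ (j - i).val = x ^ i.val * (t * x ^ j.val)
      rw [← mul_assoc, hD, mul_assoc, ← hA, sub_eq_neg_add]
    · show t * x ^ (i + j).val = t * x ^ i.val * x ^ j.val
      rw [mul_assoc, hA]
    · show x ^ (j - i).val = t * x ^ i.val * (t * x ^ j.val)
      symm
      calc t * x ^ i.val * (t * x ^ j.val)
          = t * (x ^ i.val * t) * x ^ j.val := by group
        _ = t * (t * x ^ (-i).val) * x ^ j.val := by rw [hD]
        _ = (t * t) * (x ^ (-i).val * x ^ j.val) := by group
        _ = x ^ (-i).val * x ^ j.val := by rw [ht2, one_mul]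
        _ = x ^ (-i + j).val := (hA _ _).symm
        _ = x ^ (j - i).val := by rw [sub_eq_neg_add]
  let φ : DihedralGroup n →* G := MonoidHom.mk' f hmul
  have hval_inj : ∀ i j : ZMod n, x ^ i.val = x ^ j.val → i = j := by
    intro i j hij
    rw [pow_eq_pow_iff_modEq, hx, Nat.ModEq,
      Nat.mod_eq_of_lt (ZMod.val_lt i), Nat.mod_eq_of_lt (ZMod.val_lt j)] at hij
    exact ZMod.val_injective n hij
  have hxmem : ∀ k : ℕ, x ^ k ∈ Subgroup.zpowers x := fun k =>
    Subgroup.pow_mem _ (Subgroup.mem_zpowers x) _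
  have hinj : Function.Injective φ := by
    rintro (i | i) (j | j) hij
    · exact congrArg _ (hval_inj i j hij)
    · change x ^ i.val = t * x ^ j.val at hij
      exfalso
      apply hts
      have : t = x ^ i.val * (x ^ j.val)⁻¹ := eq_mul_inv_of_mul_eq hij.symm
      rw [this]
      exact Subgroup.mul_mem _ (hxmem _) (Subgroup.inv_mem _ (hxmem _))
    · change t * x ^ i.val = x ^ j.val at hij
      exfalso
      apply hts
      have : t = x ^ j.val * (x ^ i.val)⁻¹ := eq_mul_inv_of_mul_eq hij
      rw [this]
      exact Subgroup.mul_mem _ (hxmem _) (Subgroup.inv_mem _ (hxmem _))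
    · change t * x ^ i.val = t * x ^ j.val at hij
      exact congrArg _ (hval_inj i j (mul_left_cancel hij))
  have hnpow : ∀ g ∈ Subgroup.zpowers x, ∃ k : ℕ, x ^ k = g := by
    rintro g ⟨k, rfl⟩
    refine ⟨(k % (n : ℤ)).toNat, ?_⟩
    rw [← zpow_natCast, Int.toNat_of_nonneg (Int.emod_nonneg _ (by exact_mod_cast hnz)),
      ← hx, zpow_mod_orderOf]
  have hsurj : Function.Surjective φ := by
    intro g
    rcases hall g with hg | hg
    · obtain ⟨k, rfl⟩ := hnpow g hg
      refine ⟨DihedralGroup.r (k : ZMod n), ?_⟩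
      show x ^ (k : ZMod n).val = x ^ k
      rw [ZMod.val_natCast, hmod]
    · obtain ⟨k, hk⟩ := hnpow _ hg
      refine ⟨DihedralGroup.sr (k : ZMod n), ?_⟩
      show t * x ^ (k : ZMod n).val = g
      have h2 : x ^ (k : ZMod n).val = t * g := by rw [ZMod.val_natCast, hmod, hk]
      rw [h2, ← mul_assoc, ht2, one_mul]
  exact ⟨(MulEquiv.ofBijective φ ⟨hinj, hsurj⟩).symm⟩

lemma support_sup' {V : Type*} {Γ : SimpleGraph V} (H H' : Γ.Subgraph) :
    (H ⊔ H').support = H.support ∪ H'.support := by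
  ext v
  simp only [Subgraph.mem_support, Subgraph.sup_adj, Set.mem_union, exists_or]

lemma three_edges {V : Type*} [Fintype V] {Γ : SimpleGraph V}
    (h : matchingNumber Γ = 2) {a b c d p q : V}
    (h1 : Γ.Adj a b) (h2 : Γ.Adj c d) (h3 : Γ.Adj p q)
    (hac : a ≠ c) (had : a ≠ d) (hbc : b ≠ c) (hbd : b ≠ d)
    (hap : a ≠ p) (haq : a ≠ q) (hbp : b ≠ p) (hbq : b ≠ q)
    (hcp : c ≠ p) (hcq : c ≠ q) (hdp : d ≠ p) (hdq : d ≠ q) : False := by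
  classical
  set M : Γ.Subgraph := (Γ.subgraphOfAdj h1 ⊔ Γ.subgraphOfAdj h2) ⊔ Γ.subgraphOfAdj h3 with hM
  have hd12 : Disjoint (Γ.subgraphOfAdj h1).support (Γ.subgraphOfAdj h2).support := by
    rw [support_subgraphOfAdj, support_subgraphOfAdj]
    rw [Set.disjoint_iff]
    rintro v ⟨hv1, hv2⟩
    rcases hv1 with rfl | rfl <;> rcases hv2 with rfl | rfl <;> simp_all
  have hd123 : Disjoint (Γ.subgraphOfAdj h1 ⊔ Γ.subgraphOfAdj h2).support
      (Γ.subgraphOfAdj h3).support := by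
    rw [support_sup', support_subgraphOfAdj, support_subgraphOfAdj, support_subgraphOfAdj]
    rw [Set.disjoint_iff]
    rintro v ⟨hv1, hv2⟩
    rcases hv2 with rfl | rfl <;> rcases hv1 with (rfl | rfl) | (rfl | rfl) <;> simp_all
  have hmatch : M.IsMatching :=
    ((Subgraph.IsMatching.subgraphOfAdj h1).sup (Subgraph.IsMatching.subgraphOfAdj h2)
      hd12).sup (Subgraph.IsMatching.subgraphOfAdj h3) hd123
  have hedge : M.edgeSet = {s(a,b), s(c,d), s(p,q)} := by
    rw [hM, Subgraph.edgeSet_sup, Subgraph.edgeSet_sup,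
      edgeSet_subgraphOfAdj, edgeSet_subgraphOfAdj, edgeSet_subgraphOfAdj]
    rw [Set.union_assoc]
    rfl
  have hcard : M.edgeSet.ncard = 3 := by
    rw [hedge]
    rw [Set.ncard_eq_three]
    refine ⟨_, _, _, ?_, ?_, ?_, rfl⟩
    · simp only [ne_eq, Sym2.eq, Sym2.rel_iff', Prod.mk.injEq, Prod.swap_prod_mk]
      push_neg
      exact ⟨fun h => absurd h hac, fun h _ => absurd h had⟩
    · simp only [ne_eq, Sym2.eq, Sym2.rel_iff', Prod.mk.injEq, Prod.swap_prod_mk]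
      push_neg
      exact ⟨fun h => absurd h hap, fun h _ => absurd h haq⟩
    · simp only [ne_eq, Sym2.eq, Sym2.rel_iff', Prod.mk.injEq, Prod.swap_prod_mk]
      push_neg
      exact ⟨fun h => absurd h hcp, fun h _ => absurd h hcq⟩
  have hbdd : BddAbove {n | ∃ M : Γ.Subgraph, M.IsMatching ∧ M.edgeSet.ncard = n} := by
    refine ⟨(Set.univ : Set (Sym2 V)).ncard, ?_⟩
    rintro n ⟨N, _, rfl⟩
    exact Set.ncard_le_ncard (Set.subset_univ _) Set.finite_univ
  have h3mem : 3 ∈ {n | ∃ M : Γ.Subgraph, M.IsMatching ∧ M.edgeSet.ncard = n} :=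
    ⟨M, hmatch, hcard⟩
  have := le_csSup hbdd h3mem
  rw [matchingNumber] at h
  omega

lemma two_edges {V : Type*} [Fintype V] {Γ : SimpleGraph V}
    (h : matchingNumber Γ = 2) :
    ∃ a b c d : V, Γ.Adj a b ∧ Γ.Adj c d ∧ a ≠ c ∧ a ≠ d ∧ b ≠ c ∧ b ≠ d := by
  classical
  have hbdd : BddAbove {n | ∃ M : Γ.Subgraph, M.IsMatching ∧ M.edgeSet.ncard = n} := by
    refine ⟨(Set.univ : Set (Sym2 V)).ncard, ?_⟩
    rintro n ⟨N, _, rfl⟩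
    exact Set.ncard_le_ncard (Set.subset_univ _) Set.finite_univ
  have hne : {n | ∃ M : Γ.Subgraph, M.IsMatching ∧ M.edgeSet.ncard = n}.Nonempty := by
    refine ⟨0, ⊥, ?_, ?_⟩
    · intro v hv
      simp only [Subgraph.verts_bot, Set.mem_empty_iff_false] at hv
    · simp [Subgraph.edgeSet_bot]
  have h2 : 2 ∈ {n | ∃ M : Γ.Subgraph, M.IsMatching ∧ M.edgeSet.ncard = n} := by
    rw [matchingNumber] at h
    exact h ▸ Nat.sSup_mem hne hbdd
  obtain ⟨M, hmatch, hcard⟩ := h2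
  rw [Set.ncard_eq_two] at hcard
  obtain ⟨e1, e2, hne12, hset⟩ := hcard
  have he1 : e1 ∈ M.edgeSet := by rw [hset]; left; rfl
  have he2 : e2 ∈ M.edgeSet := by rw [hset]; right; rfl
  induction e1 using Sym2.ind with | _ a b =>
  induction e2 using Sym2.ind with | _ c d =>
  rw [Subgraph.mem_edgeSet] at he1 he2
  refine ⟨a, b, c, d, M.adj_sub he1, M.adj_sub he2, ?_, ?_, ?_, ?_⟩
  · rintro rfl
    have := (hmatch (M.edge_vert he1)).unique he1 he2
    exact hne12 (by rw [this])
  · rintro rfl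
    have := (hmatch (M.edge_vert he1)).unique he1 he2.symm
    subst this
    exact hne12 (Sym2.eq_swap)
  · rintro rfl
    have := (hmatch (M.edge_vert he1.symm)).unique he1.symm he2
    subst this
    exact hne12 (Sym2.eq_swap)
  · rintro rfl
    have := (hmatch (M.edge_vert he1.symm)).unique he1.symm he2.symm
    subst this
    exact hne12 rfl

end Aux

theorem stmt12 (G : Type*) [Group G] [Fintype G]
    (h : matchingNumber (powerGraph G) = 2) :
    Nonempty (G ≃* Multiplicative (ZMod 4)) ∨ Nonempty (G ≃* Multiplicative (ZMod 5)) ∨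
    Nonempty (G ≃* DihedralGroup 3) ∨ Nonempty (G ≃* DihedralGroup 4) := by
  classical
  obtain ⟨a, b, c, d, hab, hcd, hac, had, hbc, hbd⟩ := two_edges h
  by_cases hX : ∃ x : G, x * x ≠ 1
  swap
  · exfalso
    push_neg at hX
    have hpow : ∀ (z : G) (n : ℕ), z ^ n = 1 ∨ z ^ n = z := by
      intro z n
      rcases Nat.even_or_odd n with ⟨m, rfl⟩ | ⟨m, rfl⟩
      · left
        rw [pow_add]
        exact hX _
      · right
        rw [pow_add, pow_one, two_mul, pow_add]
        rw [hX (z ^ m), one_mul]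
    have hone : ∀ u v : G, (powerGraph G).Adj u v → u = 1 ∨ v = 1 := by
      rintro u v ⟨hne, hp | hp⟩
      · obtain ⟨n, hn⟩ := hp
        rcases hpow v n with h' | h'
        · left; rw [← hn, h']
        · exact absurd (hn.symm.trans h') hne
      · obtain ⟨n, hn⟩ := hp
        rcases hpow u n with h' | h'
        · right; rw [← hn, h']
        · exact absurd (hn.symm.trans h') (Ne.symm hne)
    rcases hone a b hab with h1 | h1 <;> rcases hone c d hcd with h2 | h2
    · exact hac (h1.trans h2.symm)
    · exact had (h1.trans h2.symm)
    · exact hbc (h1.trans h2.symm)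
    · exact hbd (h1.trans h2.symm)
  obtain ⟨x, hx2⟩ := hX
  have hx1 : x ≠ 1 := fun hh => hx2 (by rw [hh, one_mul])
  have hadj_inv : ∀ z : G, z * z ≠ 1 → (powerGraph G).Adj z z⁻¹ := by
    intro z hz
    refine ⟨fun hh => hz ?_, Or.inr ⟨orderOf z - 1, ?_⟩⟩
    · nth_rewrite 2 [hh]
      exact mul_inv_cancel z
    · have ho : 0 < orderOf z := orderOf_pos z
      have : z ^ (orderOf z - 1) * z = 1 := by
        rw [← pow_succ, Nat.sub_add_cancel ho, pow_orderOf_eq_one]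
      exact eq_inv_of_mul_eq_one_left this
  have hsqinv : ∀ z : G, z * z ≠ 1 → z⁻¹ * z⁻¹ ≠ 1 := by
    intro z hz hh
    rw [← mul_inv_rev, inv_eq_one] at hh
    exact hz hh
  by_cases hT : ∃ t : G, t * t = 1 ∧ t ≠ 1
  · -- an involution exists
    obtain ⟨t, ht2, ht1⟩ := hT
    have key : ∀ y : G, y * y = 1 ∨ y = x ∨ y = x⁻¹ := by
      intro y
      by_contra hcon
      push_neg at hcon
      obtain ⟨hy2, hyx, hyxi⟩ := hcon
      have hy1 : y ≠ 1 := fun hh => hy2 (by rw [hh, one_mul])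
      refine three_edges h
        (show (powerGraph G).Adj 1 t from ⟨fun hh => ht1 hh.symm, Or.inl ⟨0, pow_zero t⟩⟩)
        (hadj_inv x hx2) (hadj_inv y hy2)
        (Ne.symm hx1) (Ne.symm (inv_ne_one.mpr hx1))
        (fun hh => hx2 (by rw [← hh]; exact ht2))
        (fun hh => hsqinv x hx2 (by rw [← hh]; exact ht2))
        (Ne.symm hy1) (Ne.symm (inv_ne_one.mpr hy1))
        (fun hh => hy2 (by rw [← hh]; exact ht2))
        (fun hh => hsqinv y hy2 (by rw [← hh]; exact ht2))
        (Ne.symm hyx)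
        (fun hh => hyxi (by rw [hh, inv_inv]))
        (Ne.symm hyxi)
        (fun hh => hyx (inv_injective hh).symm)
    have ho34 : orderOf x = 3 ∨ orderOf x = 4 := by
      rcases key (x * x) with h4 | hxx | hxi
      · right
        have hx4 : x ^ 4 = 1 := by
          rw [show (4:ℕ) = 2 * 2 from rfl, pow_mul, pow_two, pow_two]
          exact h4
        have hd : orderOf x ∣ 4 := orderOf_dvd_of_pow_eq_one hx4
        have h1' : orderOf x ≠ 1 := by simpa [orderOf_eq_one_iff] using hx1
        have h2' : orderOf x ≠ 2 := fun hh => hx2 (by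
          have := pow_orderOf_eq_one x
          rw [hh, pow_two] at this
          exact this)
        have hd' : orderOf x ∣ 2 ^ 2 := by
          rw [show ((2:ℕ)^2 = 4) from rfl]; exact hd
        obtain ⟨i, hi2, hoi⟩ := (Nat.dvd_prime_pow Nat.prime_two).mp hd'
        have hi' : i = 0 ∨ i = 1 ∨ i = 2 := by omega
        rcases hi' with rfl | rfl | rfl
        · rw [pow_zero] at hoi; exact absurd hoi h1'
        · rw [pow_one] at hoi; exact absurd hoi h2'
        · rw [hoi]; norm_num
      · exfalso
        exact hx1 (mul_left_cancel (show x * x = x * 1 by rw [mul_one]; exact hxx))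
      · left
        have hx3 : x ^ 3 = 1 := by
          rw [show (3:ℕ) = 2 + 1 from rfl, pow_add, pow_two, pow_one, hxi, inv_mul_cancel]
        have hd : orderOf x ∣ 3 := orderOf_dvd_of_pow_eq_one hx3
        have h1' : orderOf x ≠ 1 := by simpa [orderOf_eq_one_iff] using hx1
        rcases (Nat.Prime.eq_one_or_self_of_dvd Nat.prime_three _ hd) with h' | h'
        · exact absurd h' h1'
        · exact h'
    by_cases hout : ∀ g : G, g ∈ Subgroup.zpowers x
    · have htop : Subgroup.zpowers x = ⊤ := by rwa [Subgroup.eq_top_iff']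
      have hcardG : Nat.card G = orderOf x := by
        calc Nat.card G = Nat.card (⊤ : Subgroup G) := Subgroup.card_top.symm
          _ = Nat.card (Subgroup.zpowers x) := by rw [htop]
          _ = orderOf x := Nat.card_zpowers x
      rcases ho34 with h3 | h4
      · exfalso
        haveI : Fact (Nat.Prime 2) := ⟨Nat.prime_two⟩
        have hot : orderOf t = 2 := orderOf_eq_prime (by rw [pow_two]; exact ht2) ht1
        have hdvd : orderOf t ∣ Fintype.card G := orderOf_dvd_card
        rw [hot, ← Nat.card_eq_fintype_card, hcardG, h3] at hdvd
        norm_num at hdvd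
      · left
        haveI : IsCyclic G := ⟨⟨x, hout⟩⟩
        exact ⟨mulEquivOfCyclicCardEq (by rw [hcardG, h4]; simp [Nat.card_eq_fintype_card])⟩
    · push_neg at hout
      obtain ⟨u, hu⟩ := hout
      have hrefl : ∀ v : G, v ∉ Subgroup.zpowers x → v * v = 1 ∧ v * x * v = x⁻¹ := by
        intro v hv
        have hv2 : v * v = 1 := by
          rcases key v with h' | h' | h'
          · exact h'
          · exact absurd (by rw [h']; exact Subgroup.mem_zpowers x) hv
          · exact absurd (by rw [h']; exact Subgroup.inv_mem _ (Subgroup.mem_zpowers x)) hv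
        have hvx : v * x ∉ Subgroup.zpowers x := by
          intro hmem
          apply hv
          have hveq : v = (v * x) * x⁻¹ := by group
          rw [hveq]
          exact Subgroup.mul_mem _ hmem (Subgroup.inv_mem _ (Subgroup.mem_zpowers x))
        have hvx2 : (v * x) * (v * x) = 1 := by
          rcases key (v * x) with h' | h' | h'
          · exact h'
          · exfalso
            apply hv
            have hveq : v = 1 := mul_right_cancel (show v * x = 1 * x by rw [one_mul]; exact h')
            rw [hveq]
            exact Subgroup.one_mem _
          · exfalso
            apply hvx
            rw [h']
            exact Subgroup.inv_mem _ (Subgroup.mem_zpowers x)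
        refine ⟨hv2, ?_⟩
        have hfin : (v * x * v) * x = 1 := by
          rw [show v * x * v * x = (v * x) * (v * x) by group]
          exact hvx2
        exact eq_inv_of_mul_eq_one_left hfin
      obtain ⟨hu2, hux⟩ := hrefl u hu
      have hall : ∀ g : G, g ∈ Subgroup.zpowers x ∨ u * g ∈ Subgroup.zpowers x := by
        intro g
        by_contra hcon
        push_neg at hcon
        obtain ⟨hg, hug⟩ := hcon
        obtain ⟨hg2, hgx⟩ := hrefl g hg
        obtain ⟨hw2, hwx⟩ := hrefl (u * g) hug
        have hxu : x * u = u * x⁻¹ := by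
          have h1 : u * (u * x * u) = u * x⁻¹ := by rw [hux]
          rw [show u * (u * x * u) = (u * u) * (x * u) by group, hu2, one_mul] at h1
          exact h1
        have hgx' : g * x = x⁻¹ * g := by
          have h1 : (g * x * g) * g = x⁻¹ * g := by rw [hgx]
          rw [show (g * x * g) * g = (g * x) * (g * g) by group, hg2, mul_one] at h1
          exact h1
        have hcomp : (u * g) * x * (u * g) = x := by
          calc (u * g) * x * (u * g) = u * g * (x * u) * g := by group
            _ = u * g * (u * x⁻¹) * g := by rw [hxu]
            _ = u * g * u * (x⁻¹ * g) := by group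
            _ = u * g * u * (g * x) := by rw [← hgx']
            _ = ((u * g) * (u * g)) * x := by group
            _ = x := by rw [hw2, one_mul]
        have hfin : x⁻¹ = x := hwx.symm.trans hcomp
        apply hx2
        have hxx : x * x = x * x⁻¹ := by rw [hfin]
        rw [hxx, mul_inv_cancel]
      rcases ho34 with h3 | h4
      · exact Or.inr (Or.inr (Or.inl (aux_dihedral 3 x u h3 hu2 hux hu hall)))
      · exact Or.inr (Or.inr (Or.inr (aux_dihedral 4 x u h4 hu2 hux hu hall)))
  · -- no involutions
    push_neg at hT
    have hinvinv : ∀ z : G, z * z ≠ 1 → z ≠ z⁻¹ := by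
      intro z hz hh
      apply hz
      nth_rewrite 2 [hh]
      exact mul_inv_cancel z
    by_cases hY : ∃ y : G, y ≠ 1 ∧ y ≠ x ∧ y ≠ x⁻¹
    · obtain ⟨y, hy1, hyx, hyxi⟩ := hY
      have hy2 : y * y ≠ 1 := fun hh => hy1 (hT y hh)
      have key : ∀ z : G, z = 1 ∨ z = x ∨ z = x⁻¹ ∨ z = y ∨ z = y⁻¹ := by
        intro z
        by_contra hcon
        push_neg at hcon
        obtain ⟨hz1, hzx, hzxi, hzy, hzyi⟩ := hcon
        have hz2 : z * z ≠ 1 := fun hh => hz1 (hT z hh)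
        exact three_edges h (hadj_inv x hx2) (hadj_inv y hy2) (hadj_inv z hz2)
          (Ne.symm hyx)
          (fun hh => hyxi (by rw [hh, inv_inv]))
          (Ne.symm hyxi)
          (fun hh => hyx (inv_injective hh).symm)
          (Ne.symm hzx)
          (fun hh => hzxi (by rw [hh, inv_inv]))
          (Ne.symm hzxi)
          (fun hh => hzx (inv_injective hh).symm)
          (Ne.symm hzy)
          (fun hh => hzyi (by rw [hh, inv_inv]))
          (Ne.symm hzyi)
          (fun hh => hzy (inv_injective hh).symm)
      -- G has exactly 5 elements
      have hxinv1 : x⁻¹ ≠ 1 := inv_ne_one.mpr hx1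
      have hyinv1 : y⁻¹ ≠ 1 := inv_ne_one.mpr hy1
      have hxne : x ≠ x⁻¹ := hinvinv x hx2
      have hyne : y ≠ y⁻¹ := hinvinv y hy2
      have hyinvx : y⁻¹ ≠ x := fun hh => hyxi (by rw [← hh, inv_inv])
      have hyinvxi : y⁻¹ ≠ x⁻¹ := fun hh => hyx (inv_injective hh)
      have huniv : (Finset.univ : Finset G) = {1, x, x⁻¹, y, y⁻¹} := by
        symm
        apply Finset.eq_univ_iff_forall.mpr
        intro z
        simp only [Finset.mem_insert, Finset.mem_singleton]
        exact key z
      have hcard5 : Fintype.card G = 5 := by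
        rw [← Finset.card_univ, huniv]
        rw [Finset.card_insert_of_notMem (by
            simp only [Finset.mem_insert, Finset.mem_singleton]
            push_neg
            exact ⟨Ne.symm hx1, Ne.symm hxinv1, Ne.symm hy1, Ne.symm hyinv1⟩),
          Finset.card_insert_of_notMem (by
            simp only [Finset.mem_insert, Finset.mem_singleton]
            push_neg
            exact ⟨hxne, Ne.symm hyx, Ne.symm hyinvx⟩),
          Finset.card_insert_of_notMem (by
            simp only [Finset.mem_insert, Finset.mem_singleton]
            push_neg
            exact ⟨Ne.symm hyxi, Ne.symm hyinvxi⟩),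
          Finset.card_insert_of_notMem (by
            simp only [Finset.mem_singleton]
            exact hyne),
          Finset.card_singleton]
      haveI : Fact (Nat.Prime 5) := ⟨by norm_num⟩
      haveI : IsCyclic G := isCyclic_of_prime_card (by rw [Nat.card_eq_fintype_card, hcard5])
      exact Or.inr (Or.inl ⟨mulEquivOfCyclicCardEq (by
        rw [Nat.card_eq_fintype_card, hcard5]
        simp [Nat.card_eq_fintype_card])⟩)
    · push_neg at hY
      exfalso
      have hmem : ∀ z : G, z = 1 ∨ z = x ∨ z = x⁻¹ := by
        intro z
        by_cases hz1 : z = 1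
        · exact Or.inl hz1
        by_cases hzx : z = x
        · exact Or.inr (Or.inl hzx)
        exact Or.inr (Or.inr (hY z hz1 hzx))
      have s4 : ({a, b, c, d} : Finset G).card = 4 := by
        rw [Finset.card_insert_of_notMem (by
            simp only [Finset.mem_insert, Finset.mem_singleton]
            push_neg
            exact ⟨hab.ne, hac, had⟩),
          Finset.card_insert_of_notMem (by
            simp only [Finset.mem_insert, Finset.mem_singleton]
            push_neg
            exact ⟨hbc, hbd⟩),
          Finset.card_insert_of_notMem (by
            simp only [Finset.mem_singleton]
            exact hcd.ne),
          Finset.card_singleton]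
      have hsub : ({a, b, c, d} : Finset G) ⊆ {1, x, x⁻¹} := by
        intro z _
        simp only [Finset.mem_insert, Finset.mem_singleton]
        exact hmem z
      have hle := Finset.card_le_card hsub
      rw [s4] at hle
      have h3 : ({1, x, x⁻¹} : Finset G).card ≤ 3 := by
        apply (Finset.card_insert_le _ _).trans
        apply Nat.succ_le_succ
        apply (Finset.card_insert_le _ _).trans
        simp
      omega
end
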